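/- arXiv:2105.13656 — 10 statements merged into one kernel-verified Lean document; each statement's English description precedes it below -/
import Mathlib

section
/- Let A, E ∈ ℂ^{n×n} be such that the pencil L(s) = A + sE is regular. Then the unstructured distance to a common null space satisfies δ₀(A,E) = √(λ_min(AᴴA + EᴴE)); that is, the infimum of √(‖Δ_A‖² + ‖Δ_E‖²) over all pairs (Δ_A, Δ_E) ∈ ℂ^{n×n} × ℂ^{n×n} for which there exists a nonzero vector v ∈ ℂⁿ with (A − Δ_A)v = 0 and (E − Δ_E)v = 0 equals the square root of the smallest eigenvalue of the positive semidefinite Hermitian matrix AᴴA + EᴴE. -/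
open Matrix
open scoped ComplexOrder

/-- The spectral norm (ℓ² operator norm) of a complex matrix. -/
noncomputable def specNorm {k : Type*} [Fintype k] [DecidableEq k]
    (X : Matrix k k ℂ) : ℝ :=
  ‖Matrix.toEuclideanCLM (𝕜 := ℂ) X‖

/-- The smallest eigenvalue of a Hermitian matrix (junk value `0` otherwise). -/
noncomputable def lamMin {k : Type*} [Fintype k] [DecidableEq k]
    (H : Matrix k k ℂ) : ℝ :=
  if h : H.IsHermitian then ⨅ i, h.eigenvalues i else 0

section aux

open scoped InnerProductSpace

/-- applying `toEuclideanCLM` is `mulVec`. -/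
private lemma udcns_clm_apply {n : ℕ} (X : Matrix (Fin n) (Fin n) ℂ) (x : Fin n → ℂ) :
    Matrix.toEuclideanCLM (𝕜 := ℂ) X ((WithLp.equiv 2 (Fin n → ℂ)).symm x) =
      (WithLp.equiv 2 (Fin n → ℂ)).symm (X *ᵥ x) := by
  exact toEuclideanCLM_toLp X x

private lemma udcns_eigen {n : ℕ} (H : Matrix (Fin n) (Fin n) ℂ) (hH : H.IsHermitian) (j : Fin n) :
    Matrix.toEuclideanCLM (𝕜 := ℂ) H (hH.eigenvectorBasis j) =
      (hH.eigenvalues j : ℂ) • hH.eigenvectorBasis j := by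
  have h := hH.mulVec_eigenvectorBasis j
  apply (WithLp.equiv 2 _).injective
  change H *ᵥ (WithLp.equiv 2 (Fin n → ℂ)) (hH.eigenvectorBasis j) =
    (hH.eigenvalues j : ℂ) • (WithLp.equiv 2 (Fin n → ℂ)) (hH.eigenvectorBasis j)
  rw [show (WithLp.equiv 2 (Fin n → ℂ)) (hH.eigenvectorBasis j) = ⇑(hH.eigenvectorBasis j)
    from rfl, h]
  ext i
  simp [RCLike.real_smul_eq_coe_smul (K := ℂ)]

private lemma udcns_quad_eq {n : ℕ} (A E : Matrix (Fin n) (Fin n) ℂ)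
    (x : EuclideanSpace ℂ (Fin n)) :
    Complex.re ⟪x, Matrix.toEuclideanCLM (𝕜 := ℂ) (Aᴴ * A + Eᴴ * E) x⟫_ℂ =
      ‖Matrix.toEuclideanCLM (𝕜 := ℂ) A x‖ ^ 2 + ‖Matrix.toEuclideanCLM (𝕜 := ℂ) E x‖ ^ 2 := by
  have hA : Matrix.toEuclideanCLM (𝕜 := ℂ) (Aᴴ * A) =
      star (Matrix.toEuclideanCLM (𝕜 := ℂ) A) * Matrix.toEuclideanCLM (𝕜 := ℂ) A := by
    rw [← star_eq_conjTranspose, _root_.map_mul, map_star]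
  have hE : Matrix.toEuclideanCLM (𝕜 := ℂ) (Eᴴ * E) =
      star (Matrix.toEuclideanCLM (𝕜 := ℂ) E) * Matrix.toEuclideanCLM (𝕜 := ℂ) E := by
    rw [← star_eq_conjTranspose, _root_.map_mul, map_star]
  rw [map_add, hA, hE]
  rw [ContinuousLinearMap.add_apply, inner_add_right]
  simp only [ContinuousLinearMap.mul_apply, ContinuousLinearMap.star_eq_adjoint,
    ContinuousLinearMap.adjoint_inner_right]
  rw [Complex.add_re, ← inner_self_eq_norm_sq (𝕜 := ℂ), ← inner_self_eq_norm_sq (𝕜 := ℂ)]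
  rfl

private lemma udcns_quad_ge {n : ℕ} (H : Matrix (Fin n) (Fin n) ℂ) (hH : H.IsHermitian)
    (x : EuclideanSpace ℂ (Fin n)) [Nonempty (Fin n)] :
    (⨅ i, hH.eigenvalues i) * ‖x‖ ^ 2 ≤
      Complex.re ⟪x, Matrix.toEuclideanCLM (𝕜 := ℂ) H x⟫_ℂ := by
  set T := Matrix.toEuclideanCLM (𝕜 := ℂ) H with hT
  set b := hH.eigenvectorBasis with hb
  have hsa : _root_.IsSelfAdjoint T := by
    rw [hT, _root_.IsSelfAdjoint, ← map_star]
    congr 1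
  have key : ∀ i, ⟪x, b i⟫_ℂ * ⟪b i, T x⟫_ℂ =
      (hH.eigenvalues i : ℂ) * (Complex.normSq ⟪b i, x⟫_ℂ : ℂ) := by
    intro i
    have h1 : ⟪b i, T x⟫_ℂ = ⟪T (b i), x⟫_ℂ := by
      conv_rhs => rw [← hsa.adjoint_eq]
      rw [ContinuousLinearMap.adjoint_inner_left]
    rw [h1, udcns_eigen H hH i, inner_smul_left, Complex.conj_ofReal]
    rw [← inner_conj_symm x (b i)]
    rw [mul_comm ((starRingEnd ℂ) _), mul_assoc]
    congr 1
    rw [mul_comm, Complex.normSq_eq_conj_mul_self]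
  have hsum : ⟪x, T x⟫_ℂ = ∑ i, (hH.eigenvalues i : ℂ) * (Complex.normSq ⟪b i, x⟫_ℂ : ℂ) := by
    rw [← b.sum_inner_mul_inner x (T x)]
    exact Finset.sum_congr rfl fun i _ => key i
  have hnorm : ‖x‖ ^ 2 = ∑ i, Complex.normSq ⟪b i, x⟫_ℂ := by
    have h0 := b.sum_inner_mul_inner x x
    have h2 : ∀ i, ⟪x, b i⟫_ℂ * ⟪b i, x⟫_ℂ = (Complex.normSq ⟪b i, x⟫_ℂ : ℂ) := by
      intro i
      rw [← inner_conj_symm x (b i), Complex.normSq_eq_conj_mul_self]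
    rw [← inner_self_eq_norm_sq (𝕜 := ℂ), ← h0]
    rw [Finset.sum_congr rfl fun i _ => h2 i]
    rw [← Complex.ofReal_sum]
    simp
  rw [hsum, hnorm, Complex.re_sum, Finset.mul_sum]
  apply Finset.sum_le_sum
  intro i _
  have h3 : ((hH.eigenvalues i : ℂ) * (Complex.normSq ⟪b i, x⟫_ℂ : ℂ)).re
      = hH.eigenvalues i * Complex.normSq ⟪b i, x⟫_ℂ := by
    rw [← Complex.ofReal_mul]; exact Complex.ofReal_re _
  rw [h3]
  exact mul_le_mul_of_nonneg_right (ciInf_le (Finite.bddBelow_range _) i)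
    (Complex.normSq_nonneg _)

private lemma udcns_vecMulVec_mulVec {n : ℕ} (x v u : Fin n → ℂ) :
    vecMulVec x (star v) *ᵥ u = (star v ⬝ᵥ u) • x := by
  ext i
  simp [vecMulVec, mulVec, dotProduct, Finset.mul_sum, mul_comm, mul_assoc, mul_left_comm]

private lemma udcns_specNorm_vecMulVec {n : ℕ} (x v : Fin n → ℂ) :
    specNorm (vecMulVec x (star v)) =
      ‖(WithLp.equiv 2 (Fin n → ℂ)).symm v‖ * ‖(WithLp.equiv 2 (Fin n → ℂ)).symm x‖ := by
  have hx : Matrix.toEuclideanCLM (𝕜 := ℂ) (vecMulVec x (star v)) =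
      (innerSL ℂ ((WithLp.equiv 2 (Fin n → ℂ)).symm v)).smulRight
        ((WithLp.equiv 2 (Fin n → ℂ)).symm x) := by
    apply ContinuousLinearMap.ext
    intro u
    apply (WithLp.equiv 2 _).injective
    change vecMulVec x (star v) *ᵥ (WithLp.equiv 2 _ u) = ⟪(WithLp.equiv 2 (Fin n → ℂ)).symm v, u⟫_ℂ •
      (WithLp.equiv 2 (Fin n → ℂ)) ((WithLp.equiv 2 (Fin n → ℂ)).symm x)
    rw [show ⟪(WithLp.equiv 2 (Fin n → ℂ)).symm v, u⟫_ℂ = star v ⬝ᵥ (WithLp.equiv 2 _ u) from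
      dotProduct_comm (WithLp.equiv 2 _ u) (star v)]
    rw [show (WithLp.equiv 2 (Fin n → ℂ)) ((WithLp.equiv 2 (Fin n → ℂ)).symm x) = x from rfl]
    rw [udcns_vecMulVec_mulVec]
  rw [specNorm, hx, ContinuousLinearMap.norm_smulRight_apply, innerSL_apply_norm]

private lemma udcns_specNorm_mulVec_le {n : ℕ} (X : Matrix (Fin n) (Fin n) ℂ) (v : Fin n → ℂ) :
    ‖(WithLp.equiv 2 (Fin n → ℂ)).symm (X *ᵥ v)‖ ≤
      specNorm X * ‖(WithLp.equiv 2 (Fin n → ℂ)).symm v‖ := by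
  rw [← udcns_clm_apply]
  exact (Matrix.toEuclideanCLM (𝕜 := ℂ) X).le_opNorm _

end aux

section main

open scoped InnerProductSpace

/-- Unstructured distance to a common null space:
`δ₀(A,E) = √(λ_min(AᴴA + EᴴE))`. -/
theorem unstructured_distance_to_common_null_space
    {n : ℕ} (A E : Matrix (Fin n) (Fin n) ℂ)
    (hreg : ∃ l : ℂ, (A + l • E).det ≠ 0) :
    sInf {r : ℝ | ∃ (DA DE : Matrix (Fin n) (Fin n) ℂ) (v : Fin n → ℂ),
        v ≠ 0 ∧ (A - DA).mulVec v = 0 ∧ (E - DE).mulVec v = 0 ∧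
        r = Real.sqrt (specNorm DA ^ 2 + specNorm DE ^ 2)} =
      Real.sqrt (lamMin (Aᴴ * A + Eᴴ * E)) := by
  classical
  set S := {r : ℝ | ∃ (DA DE : Matrix (Fin n) (Fin n) ℂ) (v : Fin n → ℂ),
      v ≠ 0 ∧ (A - DA).mulVec v = 0 ∧ (E - DE).mulVec v = 0 ∧
      r = Real.sqrt (specNorm DA ^ 2 + specNorm DE ^ 2)} with hS
  have hH : (Aᴴ * A + Eᴴ * E).IsHermitian :=
    (isHermitian_conjTranspose_mul_self A).add (isHermitian_conjTranspose_mul_self E)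
  have hlam : lamMin (Aᴴ * A + Eᴴ * E) = ⨅ i, hH.eigenvalues i := by
    rw [lamMin, dif_pos hH]
  rcases Nat.eq_zero_or_pos n with hn | hn
  · -- the degenerate case `n = 0`
    subst hn
    have hempty : S = ∅ := by
      ext r
      simp only [hS, Set.mem_setOf_eq, Set.mem_empty_iff_false, iff_false]
      rintro ⟨DA, DE, v, hv, -⟩
      exact hv (Subsingleton.elim v 0)
    rw [hempty, Real.sInf_empty, hlam, iInf_of_isEmpty, Real.sInf_empty, Real.sqrt_zero]
  · haveI : Nonempty (Fin n) := Fin.pos_iff_nonempty.mp hn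
    obtain ⟨i₀, hi₀⟩ := Finite.exists_min hH.eigenvalues
    have hmin : ⨅ i, hH.eigenvalues i = hH.eigenvalues i₀ :=
      le_antisymm (ciInf_le (Finite.bddBelow_range _) i₀) (le_ciInf hi₀)
    set v : EuclideanSpace ℂ (Fin n) := hH.eigenvectorBasis i₀ with hvdef
    set vf : Fin n → ℂ := WithLp.equiv 2 (Fin n → ℂ) v with hvf
    have hvsymm : (WithLp.equiv 2 (Fin n → ℂ)).symm vf = v := rfl
    have hv1 : ‖v‖ = 1 := hH.eigenvectorBasis.orthonormal.1 i₀
    have hvne : vf ≠ 0 := by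
      intro h0
      have : v = 0 := by
        apply (WithLp.equiv 2 (Fin n → ℂ)).injective
        exact h0
      rw [this, norm_zero] at hv1
      exact zero_ne_one hv1
    have hdot : star vf ⬝ᵥ vf = (1 : ℂ) := by
      have h1 : ⟪v, v⟫_ℂ = star vf ⬝ᵥ vf := dotProduct_comm vf (star vf)
      have h2 : ⟪v, v⟫_ℂ = (‖v‖ : ℂ) ^ 2 := inner_self_eq_norm_sq_to_K v
      rw [← h1, h2, hv1]
      norm_num
    set DA := vecMulVec (A *ᵥ vf) (star vf) with hDAdef
    set DE := vecMulVec (E *ᵥ vf) (star vf) with hDEdef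
    have hDAv : (A - DA) *ᵥ vf = 0 := by
      rw [sub_mulVec, hDAdef, udcns_vecMulVec_mulVec, hdot, one_smul, sub_self]
    have hDEv : (E - DE) *ᵥ vf = 0 := by
      rw [sub_mulVec, hDEdef, udcns_vecMulVec_mulVec, hdot, one_smul, sub_self]
    -- the value attained
    have hval : specNorm DA ^ 2 + specNorm DE ^ 2 = hH.eigenvalues i₀ := by
      have hnA : specNorm DA = ‖Matrix.toEuclideanCLM (𝕜 := ℂ) A v‖ := by
        rw [hDAdef, udcns_specNorm_vecMulVec, hvsymm, hv1, one_mul, ← hvsymm, udcns_clm_apply]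
      have hnE : specNorm DE = ‖Matrix.toEuclideanCLM (𝕜 := ℂ) E v‖ := by
        rw [hDEdef, udcns_specNorm_vecMulVec, hvsymm, hv1, one_mul, ← hvsymm, udcns_clm_apply]
      rw [hnA, hnE, ← udcns_quad_eq A E v]
      rw [udcns_eigen _ hH i₀, inner_smul_right]
      have : ⟪v, v⟫_ℂ = (‖v‖ : ℂ) ^ 2 := inner_self_eq_norm_sq_to_K v
      rw [hvdef] at this ⊢
      rw [this, hv1]
      norm_num
    have hmem : Real.sqrt (lamMin (Aᴴ * A + Eᴴ * E)) ∈ S := by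
      refine ⟨DA, DE, vf, hvne, hDAv, hDEv, ?_⟩
      rw [hval, hlam, hmin]
    have hbdd : BddBelow S := by
      refine ⟨0, fun r hr => ?_⟩
      obtain ⟨DA', DE', v', hv', h1, h2, rfl⟩ := hr
      exact Real.sqrt_nonneg _
    refine le_antisymm (csInf_le hbdd hmem) (le_csInf ⟨_, hmem⟩ ?_)
    rintro r ⟨DA', DE', v', hv', h1, h2, rfl⟩
    apply Real.sqrt_le_sqrt
    -- the lower bound
    set w : EuclideanSpace ℂ (Fin n) := (WithLp.equiv 2 (Fin n → ℂ)).symm v' with hwdef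
    have hwne : w ≠ 0 := by
      intro h0
      exact hv' ((WithLp.equiv 2 (Fin n → ℂ)).symm.injective h0)
    have hwpos : (0 : ℝ) < ‖w‖ ^ 2 := pow_pos (norm_pos_iff.mpr hwne) 2
    have hA1 : A *ᵥ v' = DA' *ᵥ v' := by
      rw [sub_mulVec] at h1
      exact sub_eq_zero.mp h1
    have hE1 : E *ᵥ v' = DE' *ᵥ v' := by
      rw [sub_mulVec] at h2
      exact sub_eq_zero.mp h2
    have hqA : ‖Matrix.toEuclideanCLM (𝕜 := ℂ) A w‖ ≤ specNorm DA' * ‖w‖ := by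
      rw [hwdef, udcns_clm_apply, hA1]
      exact udcns_specNorm_mulVec_le DA' v'
    have hqE : ‖Matrix.toEuclideanCLM (𝕜 := ℂ) E w‖ ≤ specNorm DE' * ‖w‖ := by
      rw [hwdef, udcns_clm_apply, hE1]
      exact udcns_specNorm_mulVec_le DE' v'
    have hquad := udcns_quad_ge (Aᴴ * A + Eᴴ * E) hH w
    rw [udcns_quad_eq A E w] at hquad
    have hub : ‖Matrix.toEuclideanCLM (𝕜 := ℂ) A w‖ ^ 2 + ‖Matrix.toEuclideanCLM (𝕜 := ℂ) E w‖ ^ 2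
        ≤ (specNorm DA' ^ 2 + specNorm DE' ^ 2) * ‖w‖ ^ 2 := by
      have h3 : ‖Matrix.toEuclideanCLM (𝕜 := ℂ) A w‖ ^ 2 ≤ (specNorm DA' * ‖w‖) ^ 2 :=
        pow_le_pow_left₀ (norm_nonneg _) hqA 2
      have h4 : ‖Matrix.toEuclideanCLM (𝕜 := ℂ) E w‖ ^ 2 ≤ (specNorm DE' * ‖w‖) ^ 2 :=
        pow_le_pow_left₀ (norm_nonneg _) hqE 2
      calc _ ≤ (specNorm DA' * ‖w‖) ^ 2 + (specNorm DE' * ‖w‖) ^ 2 := add_le_add h3 h4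
        _ = (specNorm DA' ^ 2 + specNorm DE' ^ 2) * ‖w‖ ^ 2 := by ring
    rw [hlam]
    exact le_of_mul_le_mul_right (le_trans hquad hub) hwpos

end main
end

section
/- Let A, E ∈ ℂ^{n×n} be skew-Hermitian matrices (Aᴴ = −A, Eᴴ = −E) such that the pencil L(s) = A + sE is regular. Then the infimum of √(‖Δ_A‖² + ‖Δ_E‖²) over all pairs of skew-Hermitian matrices (Δ_A, Δ_E) for which there exists a nonzero v ∈ ℂⁿ with (A − Δ_A)v = 0 and (E − Δ_E)v = 0 equals √(λ_min(AᴴA + EᴴE)). -/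
open Matrix

section Aux

open ContinuousLinearMap Complex

variable {F : Type*} [NormedAddCommGroup F] [InnerProductSpace ℂ F] [CompleteSpace F]

local notation "⟪" x ", " y "⟫" => @inner ℂ _ _ x y

/-- rank-one operator `x ↦ ⟪q, x⟫ • p`. -/
noncomputable def rk1 (p q : F) : F →L[ℂ] F := (innerSL ℂ q).smulRight p

@[simp] lemma rk1_apply (p q x : F) : rk1 p q x = ⟪q, x⟫ • p := rfl

lemma rk1_adjoint (p q : F) : ContinuousLinearMap.adjoint (rk1 p q) = rk1 q p := by
  symm
  rw [ContinuousLinearMap.eq_adjoint_iff]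
  intro x y
  simp only [rk1_apply, inner_smul_left, inner_smul_right, inner_conj_symm]
  ring

lemma key_alg (α c d : ℂ) (β : ℝ) (hβ : β ≠ 0) (hα : (starRingEnd ℂ) α = -α) :
    Complex.normSq (α*c - d) + β^2 * Complex.normSq (c - ((β:ℂ)^2)⁻¹ * α * d) =
      (Complex.normSq α + β^2) * (Complex.normSq c + (β^2)⁻¹ * Complex.normSq d) := by
  have h0 : α.re = 0 := by
    have := congrArg Complex.re hα
    simp at this
    linarith
  have hcast : ((β:ℂ)^2)⁻¹ = (((β^2)⁻¹ : ℝ) : ℂ) := by push_cast; ring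
  rw [hcast]
  simp only [Complex.normSq_apply, Complex.sub_re, Complex.sub_im, Complex.mul_re,
    Complex.mul_im, Complex.ofReal_re, Complex.ofReal_im, h0]
  field_simp
  ring

omit [CompleteSpace F] in
lemma norm_smul_add_smul_sq (v w : F) (hv : ‖v‖ = 1) (hvw : ⟪v, w⟫ = 0) (s t : ℂ) :
    ‖s • v + t • w‖ ^ 2 = Complex.normSq s + Complex.normSq t * ‖w‖ ^ 2 := by
  rw [@norm_add_sq ℂ]
  have h1 : ⟪s • v, t • w⟫ = 0 := by
    rw [inner_smul_left, inner_smul_right, hvw]; ring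
  rw [h1]
  have h2 : ‖s • v‖ = ‖s‖ := by rw [norm_smul, hv, mul_one]
  rw [h2, norm_smul t w]
  simp [Complex.normSq_eq_norm_sq]
  ring

/-- Given a unit vector `v` and a target `a` whose inner product with `v` is purely
imaginary, there is a skew-adjoint operator mapping `v` to `a` with norm at most `‖a‖`. -/
lemma skew_exists (v a : F) (hv : ‖v‖ = 1)
    (hva : (starRingEnd ℂ) ⟪v, a⟫ = -⟪v, a⟫) :
    ∃ T : F →L[ℂ] F, ContinuousLinearMap.adjoint T = -T ∧ T v = a ∧ ‖T‖ ≤ ‖a‖ := by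
  set α : ℂ := ⟪v, a⟫ with hαdef
  have hvv : ⟪v, v⟫ = 1 := by
    rw [inner_self_eq_norm_sq_to_K, hv]; norm_num
  set w : F := a - α • v with hwdef
  have hvw : ⟪v, w⟫ = 0 := by
    simp [hwdef, inner_sub_right, inner_smul_right, hvv, hv, hαdef]
  have hwv : ⟪w, v⟫ = 0 := by
    rw [← inner_conj_symm, hvw, map_zero]
  have ha : a = α • v + w := by rw [hwdef]; abel
  have hanorm : ‖a‖ ^ 2 = Complex.normSq α + ‖w‖ ^ 2 := by
    have h := norm_smul_add_smul_sq v w hv hvw α 1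
    simp only [one_smul, Complex.normSq_one, one_mul] at h
    rw [ha, h]
  set β : ℝ := ‖w‖ with hβdef
  by_cases hw : w = 0
  · refine ⟨α • rk1 v v, ?_, ?_, ?_⟩
    · rw [map_smulₛₗ, rk1_adjoint, hva, neg_smul]
    · simp [hvv, ha, hw, hv]
    · have hnα : ‖a‖ = ‖α‖ := by
        rw [ha, hw, add_zero, norm_smul, hv, mul_one]
      rw [hnα]
      apply ContinuousLinearMap.opNorm_le_bound _ (norm_nonneg α)
      intro x
      simp only [ContinuousLinearMap.smul_apply, rk1_apply, norm_smul]
      calc ‖α‖ * (‖⟪v,x⟫‖ * ‖v‖) ≤ ‖α‖ * (‖v‖ * ‖x‖ * ‖v‖) := by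
            gcongr; exact norm_inner_le_norm v x
        _ = ‖α‖ * ‖x‖ := by rw [hv]; ring
  · have hβ : β ≠ 0 := by simpa [hβdef] using hw
    have hβpos : 0 < β := lt_of_le_of_ne (norm_nonneg w) (Ne.symm hβ)
    set u : F := (β⁻¹ : ℂ) • w with hudef
    have hu1 : ‖u‖ = 1 := by
      rw [hudef, norm_smul]
      simp [hβdef]
      field_simp
    have hvu : ⟪v, u⟫ = 0 := by simp [hudef, inner_smul_right, hvw]
    set T : F →L[ℂ] F := α • rk1 v v + rk1 w v - rk1 v w - α • rk1 u u with hT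
    have hTx : ∀ x, T x = (α * ⟪v,x⟫ - ⟪w,x⟫) • v + (⟪v,x⟫ - ((β:ℂ)^2)⁻¹ * α * ⟪w,x⟫) • w := by
      intro x
      have huu : (⟪u, x⟫ : ℂ) • u = (((β:ℂ)^2)⁻¹ * ⟪w,x⟫) • w := by
        rw [hudef, inner_smul_left, smul_smul]
        congr 1
        simp
        ring
      simp only [hT, ContinuousLinearMap.sub_apply, ContinuousLinearMap.add_apply,
        ContinuousLinearMap.smul_apply, rk1_apply, huu]
      rw [smul_smul]
      module
    refine ⟨T, ?_, ?_, ?_⟩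
    · rw [hT]
      rw [map_sub, map_sub, map_add, map_smulₛₗ, map_smulₛₗ, rk1_adjoint, rk1_adjoint,
        rk1_adjoint, rk1_adjoint, hva]
      module
    · rw [hTx v, hvv, hwv]
      rw [ha]
      module
    · apply ContinuousLinearMap.opNorm_le_bound _ (norm_nonneg a)
      intro x
      have hb : ‖⟪v,x⟫‖^2 + ‖⟪u,x⟫‖^2 ≤ ‖x‖^2 := by
        have horth : Orthonormal ℂ ![v, u] := by
          rw [orthonormal_iff_ite]
          intro i j
          have huv : ⟪u, v⟫ = 0 := by rw [← inner_conj_symm, hvu, map_zero]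
          fin_cases i <;> fin_cases j <;>
            simp [hvv, hvu, huv, hu1, hv, inner_self_eq_norm_sq_to_K]
        have := horth.sum_inner_products_le (𝕜 := ℂ) x (s := Finset.univ)
        simpa [Fin.sum_univ_two] using this
      have hnb : ‖(β:ℂ)‖ = β := by
        simp [abs_of_pos hβpos]
      have husq : ‖⟪u,x⟫‖^2 = (β^2)⁻¹ * Complex.normSq ⟪w,x⟫ := by
        have h1 : (⟪u,x⟫:ℂ) = (β:ℂ)⁻¹ * ⟪w,x⟫ := by
          rw [hudef, inner_smul_left, map_inv₀, Complex.conj_ofReal]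
        rw [h1, norm_mul, mul_pow, norm_inv, hnb, inv_pow]
        congr 1
        simp [Complex.normSq_eq_norm_sq]
      have hTx2 : ‖T x‖^2 = (Complex.normSq α + β^2) *
          (Complex.normSq ⟪v,x⟫ + (β^2)⁻¹ * Complex.normSq ⟪w,x⟫) := by
        rw [hTx x, norm_smul_add_smul_sq v w hv hvw, ← hβdef,
          mul_comm (Complex.normSq (⟪v,x⟫ - ((β:ℂ)^2)⁻¹ * α * ⟪w,x⟫)) (β^2),
          key_alg α ⟪v,x⟫ ⟪w,x⟫ β hβ hva]
      have hle : ‖T x‖^2 ≤ ‖a‖^2 * ‖x‖^2 := by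
        rw [hTx2, hanorm]
        have h1 : Complex.normSq ⟪v,x⟫ + (β^2)⁻¹ * Complex.normSq ⟪w,x⟫ ≤ ‖x‖^2 := by
          rw [← husq]
          have : Complex.normSq ⟪v,x⟫ = ‖⟪v,x⟫‖^2 := by
            simp [Complex.normSq_eq_norm_sq]
          rw [this]; exact hb
        have h2 : 0 ≤ Complex.normSq α + β^2 :=
          add_nonneg (Complex.normSq_nonneg α) (sq_nonneg β)
        calc (Complex.normSq α + β ^ 2) * (Complex.normSq ⟪v,x⟫ + (β ^ 2)⁻¹ * Complex.normSq ⟪w,x⟫)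
            ≤ (Complex.normSq α + β^2) * ‖x‖^2 := by gcongr
          _ = (Complex.normSq α + ‖w‖^2) * ‖x‖^2 := by rw [hβdef]
      calc ‖T x‖ = Real.sqrt (‖T x‖^2) := by rw [Real.sqrt_sq (norm_nonneg _)]
        _ ≤ Real.sqrt (‖a‖^2 * ‖x‖^2) := Real.sqrt_le_sqrt hle
        _ = ‖a‖ * ‖x‖ := by
            rw [Real.sqrt_mul (by positivity), Real.sqrt_sq (norm_nonneg _),
              Real.sqrt_sq (norm_nonneg _)]

end Aux

section MatrixAux

open Matrix ContinuousLinearMap Complex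

variable {n : ℕ}

local notation "⟪" x ", " y "⟫" => @inner ℂ _ _ x y

lemma clm_apply_eq (X : Matrix (Fin n) (Fin n) ℂ) (y : EuclideanSpace ℂ (Fin n)) :
    Matrix.toEuclideanCLM (𝕜 := ℂ) X y =
      (WithLp.equiv 2 _).symm (X *ᵥ (WithLp.equiv 2 _ y)) := by
  rw [← Matrix.toLin'_apply]
  exact rfl

lemma clm_eigen (H : Matrix (Fin n) (Fin n) ℂ) (hH : H.IsHermitian) (i : Fin n) :
    Matrix.toEuclideanCLM (𝕜 := ℂ) H (hH.eigenvectorBasis i) =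
      ((hH.eigenvalues i : ℝ) : ℂ) • hH.eigenvectorBasis i := by
  rw [clm_apply_eq]
  apply (WithLp.equiv 2 _).symm_apply_eq.mpr ?_
  have h := hH.mulVec_eigenvectorBasis i
  rw [show (WithLp.equiv 2 _ (hH.eigenvectorBasis i) : Fin n → ℂ) = ⇑(hH.eigenvectorBasis i)
    from rfl, h]
  funext j
  simp [Complex.real_smul]

lemma inner_clm_expand (H : Matrix (Fin n) (Fin n) ℂ) (hH : H.IsHermitian)
    (x : EuclideanSpace ℂ (Fin n)) :
    (⟪x, Matrix.toEuclideanCLM (𝕜 := ℂ) H x⟫ : ℂ).re =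
      ∑ i, hH.eigenvalues i * ‖hH.eigenvectorBasis.repr x i‖ ^ 2 := by
  set b := hH.eigenvectorBasis with hb
  set c : Fin n → ℂ := fun i => b.repr x i with hc
  have hx : x = ∑ i, c i • b i := (b.sum_repr x).symm
  have hTx : Matrix.toEuclideanCLM (𝕜 := ℂ) H x
      = ∑ i, (c i * ((hH.eigenvalues i : ℝ) : ℂ)) • b i := by
    conv_lhs => rw [hx]
    rw [map_sum]
    congr 1
    funext i
    rw [_root_.map_smul, clm_eigen H hH i, smul_smul]
  rw [hTx, inner_sum, Complex.re_sum]
  apply Finset.sum_congr rfl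
  intro i _
  rw [inner_smul_right]
  have hxb : ⟪x, b i⟫ = (starRingEnd ℂ) (c i) := by
    rw [← inner_conj_symm, hc]
    simp [b.repr_apply_apply]
  rw [hxb]
  simp [Complex.mul_re, Complex.normSq_apply, Complex.sq_norm,
    Complex.normSq_apply]
  ring

lemma repr_norm_sum (b : OrthonormalBasis (Fin n) ℂ (EuclideanSpace ℂ (Fin n)))
    (x : EuclideanSpace ℂ (Fin n)) :
    ∑ i, ‖b.repr x i‖ ^ 2 = ‖x‖ ^ 2 := by
  rw [← b.repr.norm_map x, EuclideanSpace.norm_eq, Real.sq_sqrt]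
  positivity

end MatrixAux

section Main

open ContinuousLinearMap Complex

local notation "⟪" x ", " y "⟫" => @inner ℂ _ _ x y
local notation "φ" => Matrix.toEuclideanCLM (𝕜 := ℂ)

set_option maxHeartbeats 1000000 in
/-- For a regular skew-Hermitian pencil the structured distance to a common null
space equals `√(λ_min(AᴴA + EᴴE))`. -/
theorem skewHermitian_distance_to_common_null_space
    {n : ℕ} (A E : Matrix (Fin n) (Fin n) ℂ)
    (hA : Aᴴ = -A) (hE : Eᴴ = -E)
    (hreg : ∃ l : ℂ, (A + l • E).det ≠ 0) :
    sInf {r : ℝ | ∃ (DA DE : Matrix (Fin n) (Fin n) ℂ) (v : Fin n → ℂ),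
        DAᴴ = -DA ∧ DEᴴ = -DE ∧
        v ≠ 0 ∧ (A - DA).mulVec v = 0 ∧ (E - DE).mulVec v = 0 ∧
        r = Real.sqrt (specNorm DA ^ 2 + specNorm DE ^ 2)} =
      Real.sqrt (lamMin (Aᴴ * A + Eᴴ * E)) := by
  classical
  set S : Set ℝ := {r : ℝ | ∃ (DA DE : Matrix (Fin n) (Fin n) ℂ) (v : Fin n → ℂ),
        DAᴴ = -DA ∧ DEᴴ = -DE ∧
        v ≠ 0 ∧ (A - DA).mulVec v = 0 ∧ (E - DE).mulVec v = 0 ∧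
        r = Real.sqrt (specNorm DA ^ 2 + specNorm DE ^ 2)} with hSdef
  have hH : (Aᴴ * A + Eᴴ * E).IsHermitian :=
    (Matrix.isHermitian_conjTranspose_mul_self A).add (Matrix.isHermitian_conjTranspose_mul_self E)
  have hlam : lamMin (Aᴴ * A + Eᴴ * E) = ⨅ i, hH.eigenvalues i := by
    rw [lamMin, dif_pos hH]
  -- inner product expansion
  have hφH : ∀ x : EuclideanSpace ℂ (Fin n),
      (⟪x, φ (Aᴴ * A + Eᴴ * E) x⟫ : ℂ).re = ‖φ A x‖^2 + ‖φ E x‖^2 := by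
    intro x
    have h1 : φ (Aᴴ * A + Eᴴ * E) = star (φ A) * φ A + star (φ E) * φ E := by
      rw [← Matrix.star_eq_conjTranspose A, ← Matrix.star_eq_conjTranspose E,
        map_add, _root_.map_mul, _root_.map_mul, map_star, map_star]
    rw [h1]
    simp only [ContinuousLinearMap.add_apply, ContinuousLinearMap.mul_apply,
      inner_add_right, ContinuousLinearMap.star_eq_adjoint, Complex.add_re,
      ContinuousLinearMap.adjoint_inner_right]
    simp [@inner_self_eq_norm_sq_to_K ℂ, ← Complex.ofReal_pow]
  -- Rayleigh lower bound
  have hray : ∀ x : EuclideanSpace ℂ (Fin n), Nonempty (Fin n) →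
      (⨅ i, hH.eigenvalues i) * ‖x‖^2 ≤ ‖φ A x‖^2 + ‖φ E x‖^2 := by
    intro x hne
    haveI := hne
    rw [← hφH x, inner_clm_expand _ hH x, ← repr_norm_sum hH.eigenvectorBasis x,
      Finset.mul_sum]
    apply Finset.sum_le_sum
    intro i _
    exact mul_le_mul_of_nonneg_right (ciInf_le (Finite.bddBelow_range _) i) (sq_nonneg _)
  -- every element of S lies above √λmin
  have hlb : ∀ r ∈ S, Real.sqrt (⨅ i, hH.eigenvalues i) ≤ r := by
    rintro r ⟨DA, DE, v, hDA, hDE, hv0, h1, h2, rfl⟩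
    haveI hne : Nonempty (Fin n) := by
      rcases Function.ne_iff.mp hv0 with ⟨i, _⟩; exact ⟨i⟩
    set x : EuclideanSpace ℂ (Fin n) := (WithLp.equiv 2 _).symm v with hx
    have hx0 : x ≠ 0 := by
      intro h
      apply hv0
      have := congrArg (WithLp.equiv 2 (Fin n → ℂ)) h
      simpa [hx] using this
    have key : ∀ (X Y : Matrix (Fin n) (Fin n) ℂ), (X - Y) *ᵥ v = 0 → φ X x = φ Y x := by
      intro X Y h
      have h0 : φ (X - Y) x = 0 := by
        rw [clm_apply_eq]
        simp [hx, h]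
      rw [map_sub, ContinuousLinearMap.sub_apply] at h0
      exact sub_eq_zero.mp h0
    have hAx := key A DA h1
    have hEx := key E DE h2
    have hxpos : 0 < ‖x‖^2 := by
      have : 0 < ‖x‖ := norm_pos_iff.mpr hx0
      positivity
    have hmain : (⨅ i, hH.eigenvalues i) * ‖x‖^2 ≤
        (specNorm DA^2 + specNorm DE^2) * ‖x‖^2 := by
      refine le_trans (hray x hne) ?_
      rw [hAx, hEx]
      have hb1 : ‖φ DA x‖ ≤ specNorm DA * ‖x‖ :=
        (Matrix.toEuclideanCLM (𝕜 := ℂ) DA).le_opNorm x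
      have hb2 : ‖φ DE x‖ ≤ specNorm DE * ‖x‖ :=
        (Matrix.toEuclideanCLM (𝕜 := ℂ) DE).le_opNorm x
      calc ‖φ DA x‖^2 + ‖φ DE x‖^2
          ≤ (specNorm DA * ‖x‖)^2 + (specNorm DE * ‖x‖)^2 := by
            gcongr <;> first | exact norm_nonneg _ | exact hb1 | exact hb2
        _ = (specNorm DA^2 + specNorm DE^2) * ‖x‖^2 := by ring
    have hfin : (⨅ i, hH.eigenvalues i) ≤ specNorm DA^2 + specNorm DE^2 :=
      (mul_le_mul_iff_left₀ hxpos).mp hmain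
    exact Real.sqrt_le_sqrt hfin
  rcases isEmpty_or_nonempty (Fin n) with he | hne
  · -- n = 0 : the set is empty and λmin is the junk value 0
    have hS : S = ∅ := by
      rw [hSdef]
      ext r
      simp only [Set.mem_setOf_eq, Set.mem_empty_iff_false, iff_false, not_exists]
      rintro DA DE v ⟨_, _, hv0, _⟩
      exact hv0 (Subsingleton.elim v 0)
    rw [hS, Real.sInf_empty, hlam, Real.iInf_of_isEmpty, Real.sqrt_zero]
  · -- main case
    obtain ⟨i₀, hi₀⟩ := Finite.exists_min hH.eigenvalues
    have hinf : ⨅ i, hH.eigenvalues i = hH.eigenvalues i₀ :=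
      le_antisymm (ciInf_le (Finite.bddBelow_range _) i₀) (le_ciInf hi₀)
    set v : EuclideanSpace ℂ (Fin n) := hH.eigenvectorBasis i₀ with hv
    have hv1 : ‖v‖ = 1 := hH.eigenvectorBasis.orthonormal.1 i₀
    have hskew : ∀ (X : Matrix (Fin n) (Fin n) ℂ), Xᴴ = -X →
        (starRingEnd ℂ) ⟪v, φ X v⟫ = -⟪v, φ X v⟫ := by
      intro X hX
      rw [inner_conj_symm]
      have hadj : ContinuousLinearMap.adjoint (φ X) = - φ X := by
        have h1 : φ (star X) = star (φ X) := map_star (Matrix.toEuclideanCLM (𝕜 := ℂ)) X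
        rw [Matrix.star_eq_conjTranspose, hX, map_neg] at h1
        rw [← ContinuousLinearMap.star_eq_adjoint, ← h1]
      rw [← ContinuousLinearMap.adjoint_inner_right (φ X), hadj]
      simp
    obtain ⟨TA, hTA1, hTA2, hTA3⟩ := skew_exists v (φ A v) hv1 (hskew A hA)
    obtain ⟨TE, hTE1, hTE2, hTE3⟩ := skew_exists v (φ E v) hv1 (hskew E hE)
    set DA : Matrix (Fin n) (Fin n) ℂ := (Matrix.toEuclideanCLM (𝕜 := ℂ) (n := Fin n)).symm TA with hDA
    set DE : Matrix (Fin n) (Fin n) ℂ := (Matrix.toEuclideanCLM (𝕜 := ℂ) (n := Fin n)).symm TE with hDE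
    have hφDA : φ DA = TA := (Matrix.toEuclideanCLM (𝕜 := ℂ) (n := Fin n)).apply_symm_apply TA
    have hφDE : φ DE = TE := (Matrix.toEuclideanCLM (𝕜 := ℂ) (n := Fin n)).apply_symm_apply TE
    have hspecA : specNorm DA = ‖TA‖ := congrArg norm hφDA
    have hspecE : specNorm DE = ‖TE‖ := congrArg norm hφDE
    have hconj : ∀ (X : Matrix (Fin n) (Fin n) ℂ) (T : EuclideanSpace ℂ (Fin n) →L[ℂ]
        EuclideanSpace ℂ (Fin n)), φ X = T → ContinuousLinearMap.adjoint T = -T →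
        Xᴴ = -X := by
      intro X T hXT hT
      have h1 : φ (star X) = star (φ X) :=
        map_star (Matrix.toEuclideanCLM (𝕜 := ℂ) (n := Fin n)) X
      have h2 : star (φ X) = -(φ X) := by
        rw [ContinuousLinearMap.star_eq_adjoint, hXT, hT]
      have h3 : (Matrix.toEuclideanCLM (𝕜 := ℂ) (n := Fin n)).symm (star (φ X)) = star X := by
        rw [← h1, (Matrix.toEuclideanCLM (𝕜 := ℂ) (n := Fin n)).symm_apply_apply]
      have h4 : (Matrix.toEuclideanCLM (𝕜 := ℂ) (n := Fin n)).symm (-(φ X)) = -X := by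
        have h5 := _root_.map_neg ((Matrix.toEuclideanCLM (𝕜 := ℂ) (n := Fin n)).symm)
          ((Matrix.toEuclideanCLM (𝕜 := ℂ) (n := Fin n)) X)
        rw [h5, (Matrix.toEuclideanCLM (𝕜 := ℂ) (n := Fin n)).symm_apply_apply]
      have : star X = -X := by rw [← h3, h2, h4]
      rwa [Matrix.star_eq_conjTranspose] at this
    -- the common kernel vector as a plain function
    set vf : Fin n → ℂ := WithLp.equiv 2 (Fin n → ℂ) v with hvf
    have hvf0 : vf ≠ 0 := by
      intro h
      have : v = 0 := by
        have := congrArg (WithLp.equiv 2 (Fin n → ℂ)).symm h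
        simpa [hvf] using this
      rw [this, norm_zero] at hv1
      norm_num at hv1
    have hkerA : (A - DA) *ᵥ vf = 0 := by
      have h0 : φ (A - DA) v = 0 := by
        rw [map_sub, ContinuousLinearMap.sub_apply, hφDA, hTA2, sub_self]
      rw [clm_apply_eq] at h0
      have := congrArg (WithLp.equiv 2 (Fin n → ℂ)) h0
      simpa [hvf] using this
    have hkerE : (E - DE) *ᵥ vf = 0 := by
      have h0 : φ (E - DE) v = 0 := by
        rw [map_sub, ContinuousLinearMap.sub_apply, hφDE, hTE2, sub_self]
      rw [clm_apply_eq] at h0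
      have := congrArg (WithLp.equiv 2 (Fin n → ℂ)) h0
      simpa [hvf] using this
    set rv : ℝ := Real.sqrt (specNorm DA ^ 2 + specNorm DE ^ 2) with hrv
    have hmem : rv ∈ S := by
      rw [hSdef]
      exact ⟨DA, DE, vf, hconj DA TA hφDA hTA1, hconj DE TE hφDE hTE1,
        hvf0, hkerA, hkerE, rfl⟩
    -- the value of the Rayleigh quotient at the eigenvector
    have heig : ‖φ A v‖^2 + ‖φ E v‖^2 = hH.eigenvalues i₀ := by
      rw [← hφH v, clm_eigen _ hH i₀, ← hv, inner_smul_right]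
      rw [@inner_self_eq_norm_sq_to_K ℂ, hv1]
      norm_num
    have hrle : rv ≤ Real.sqrt (⨅ i, hH.eigenvalues i) := by
      rw [hrv, hinf, ← heig]
      apply Real.sqrt_le_sqrt
      have b1 : specNorm DA ≤ ‖φ A v‖ := hspecA ▸ hTA3
      have b2 : specNorm DE ≤ ‖φ E v‖ := hspecE ▸ hTE3
      have s1 : specNorm DA^2 ≤ ‖φ A v‖^2 := by
        apply pow_le_pow_left₀ (by rw [hspecA]; exact norm_nonneg _) b1
      have s2 : specNorm DE^2 ≤ ‖φ E v‖^2 := by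
        apply pow_le_pow_left₀ (by rw [hspecE]; exact norm_nonneg _) b2
      linarith
    apply le_antisymm
    · have h0 : 0 ∈ lowerBounds S := by
        rw [hSdef]
        rintro r ⟨_, _, _, _, _, _, _, _, rfl⟩
        positivity
      refine le_trans (csInf_le ⟨0, h0⟩ hmem) ?_
      rw [hlam]
      exact hrle
    · rw [hlam]
      exact le_csInf ⟨rv, hmem⟩ hlb

end Main
end

section
/- Let A, E ∈ ℂ^{n×n} with A skew-Hermitian and E Hermitian (so the pencil L(s) = A + sE is *-odd), and assume L(s) is regular. Then the infimum of √(‖Δ_A‖² + ‖Δ_E‖²) over all pairs (Δ_A, Δ_E) with Δ_A skew-Hermitian and Δ_E Hermitian for which there exists a nonzero v ∈ ℂⁿ with (A − Δ_A)v = 0 and (E − Δ_E)v = 0 equals √(λ_min(AᴴA + EᴴE)). -/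
open Matrix

section Aux

variable {n : ℕ}

open scoped ComplexOrder in
lemma dot_star_self_nonneg' (y : Fin n → ℂ) : (0:ℂ) ≤ star y ⬝ᵥ y :=
  dotProduct_star_self_nonneg y

open scoped ComplexOrder in
lemma dot_star_self_eq_zero' {y : Fin n → ℂ} : star y ⬝ᵥ y = 0 ↔ y = 0 :=
  dotProduct_star_self_eq_zero

lemma dot_star_self_re (y : Fin n → ℂ) :
    star y ⬝ᵥ y = ((star y ⬝ᵥ y).re : ℂ) ∧ 0 ≤ (star y ⬝ᵥ y).re := by
  have h := dot_star_self_nonneg' y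
  rw [Complex.le_def] at h
  simp only [Complex.zero_re, Complex.zero_im] at h
  exact ⟨by apply Complex.ext <;> simp [← h.2], h.1⟩

lemma conj_dot_mulVec (X : Matrix (Fin n) (Fin n) ℂ) (v w : Fin n → ℂ) :
    (starRingEnd ℂ) (star v ⬝ᵥ (X *ᵥ w)) = star w ⬝ᵥ (Xᴴ *ᵥ v) := by
  rw [show ((starRingEnd ℂ) (star v ⬝ᵥ (X *ᵥ w)) : ℂ) = star (star v ⬝ᵥ (X *ᵥ w)) from rfl,
    ← Matrix.star_dotProduct (X *ᵥ w) v, Matrix.star_mulVec, ← Matrix.dotProduct_mulVec]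

lemma dot_conjTranspose_mul_self (X : Matrix (Fin n) (Fin n) ℂ) (w : Fin n → ℂ) :
    star w ⬝ᵥ ((Xᴴ * X) *ᵥ w) = star (X *ᵥ w) ⬝ᵥ (X *ᵥ w) := by
  rw [← Matrix.mulVec_mulVec, Matrix.dotProduct_mulVec, ← Matrix.star_mulVec]

lemma norm_sq_eq_re_dot (x : Fin n → ℂ) :
    ‖(WithLp.equiv 2 (Fin n → ℂ)).symm x‖ ^ 2 = (star x ⬝ᵥ x).re := by
  set x' : EuclideanSpace ℂ (Fin n) := (WithLp.equiv 2 (Fin n → ℂ)).symm x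
  have h1 : (inner ℂ x' x' : ℂ) = star x ⬝ᵥ x :=
    (EuclideanSpace.inner_eq_star_dotProduct x' x').trans (dotProduct_comm _ _)
  have h2 := inner_self_eq_norm_sq (𝕜 := ℂ) x'
  rw [← h2, h1]; rfl

lemma norm_mulVec_le (X : Matrix (Fin n) (Fin n) ℂ) (x : Fin n → ℂ) :
    ‖(WithLp.equiv 2 (Fin n → ℂ)).symm (X *ᵥ x)‖ ≤
      specNorm X * ‖(WithLp.equiv 2 (Fin n → ℂ)).symm x‖ := by
  have := (Matrix.toEuclideanCLM (𝕜 := ℂ) X).le_opNorm ((WithLp.equiv 2 (Fin n → ℂ)).symm x)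
  exact this

lemma specNorm_le_of_isometry (Δ : Matrix (Fin n) (Fin n) ℂ) (c : ℝ) (hc : 0 ≤ c)
    (h : Δᴴ * Δ = ((c ^ 2 : ℝ) : ℂ) • 1) : specNorm Δ ≤ c := by
  apply ContinuousLinearMap.opNorm_le_bound _ hc
  intro x
  set x0 : Fin n → ℂ := WithLp.equiv 2 (Fin n → ℂ) x with hx0
  have hx : x = (WithLp.equiv 2 (Fin n → ℂ)).symm x0 := rfl
  have happ : Matrix.toEuclideanCLM (𝕜 := ℂ) Δ x
      = (WithLp.equiv 2 (Fin n → ℂ)).symm (Δ *ᵥ x0) := by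
    rw [hx]; rfl
  have hsq : ‖Matrix.toEuclideanCLM (𝕜 := ℂ) Δ x‖ ^ 2 = c ^ 2 * ‖x‖ ^ 2 := by
    rw [happ, norm_sq_eq_re_dot, ← dot_conjTranspose_mul_self, h]
    rw [Matrix.smul_mulVec, Matrix.one_mulVec, dotProduct_smul]
    rw [hx, norm_sq_eq_re_dot]
    simp [← Complex.ofReal_pow]
  nlinarith [norm_nonneg (Matrix.toEuclideanCLM (𝕜 := ℂ) Δ x), norm_nonneg x,
    mul_nonneg hc (norm_nonneg x)]

/-- Householder-based structured mapping: a Hermitian `M` with `M v = y` and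
`Mᴴ M = (yᴴy) • 1`, given `v` a unit vector and `vᴴ y` real. -/
lemma herm_map (v y : Fin n → ℂ) (hv : star v ⬝ᵥ v = 1)
    (hr : star (star v ⬝ᵥ y) = star v ⬝ᵥ y) :
    ∃ M : Matrix (Fin n) (Fin n) ℂ, Mᴴ = M ∧ M *ᵥ v = y ∧
      Mᴴ * M = (star y ⬝ᵥ y) • 1 := by
  by_cases hy : y = 0
  · exact ⟨0, by simp, by simp [hy], by simp [hy]⟩
  set κ : ℂ := star y ⬝ᵥ y with hκ
  obtain ⟨hκre, hκnn⟩ := dot_star_self_re y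
  have hκ0 : κ ≠ 0 := fun h => hy (dot_star_self_eq_zero'.mp h)
  set c : ℝ := Real.sqrt κ.re with hcdef
  have hc2 : ((c : ℂ)) ^ 2 = κ := by
    rw [← Complex.ofReal_pow, hcdef, Real.sq_sqrt hκnn]
    exact hκre.symm
  have hc0 : (c : ℂ) ≠ 0 := by
    intro h
    rw [h] at hc2
    exact hκ0 (by simpa using hc2.symm)
  set u : Fin n → ℂ := ((c : ℂ))⁻¹ • y with hu_def
  have hyu : (c : ℂ) • u = y := by
    rw [hu_def, smul_smul, mul_inv_cancel₀ hc0, one_smul]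
  have hu : star u ⬝ᵥ u = 1 := by
    rw [hu_def, star_smul, smul_dotProduct, dotProduct_smul, smul_eq_mul,
      smul_eq_mul, ← hκ]
    have : star ((c : ℂ))⁻¹ = ((c : ℂ))⁻¹ := by
      simp [star_inv₀]
    rw [this, ← mul_assoc, ← hc2]
    field_simp
  set t : ℂ := star v ⬝ᵥ u with ht_def
  have hcinv : star ((c : ℂ))⁻¹ = ((c : ℂ))⁻¹ := by simp
  have ht : star t = t := by
    rw [ht_def, hu_def, dotProduct_smul, smul_eq_mul, star_mul', hcinv, hr]
  have ht' : star u ⬝ᵥ v = t := by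
    rw [Matrix.star_dotProduct, ← ht_def, ht]
  have key : ∃ Hm : Matrix (Fin n) (Fin n) ℂ, Hmᴴ = Hm ∧ Hm * Hm = 1 ∧ Hm *ᵥ v = u := by
    by_cases hz : v - u = 0
    · exact ⟨1, by simp, by simp, by simp [one_mulVec, sub_eq_zero.mp hz]⟩
    set z : Fin n → ℂ := v - u with hz_def
    set ζ : ℂ := star z ⬝ᵥ z with hζ_def
    have hζ0 : ζ ≠ 0 := fun h => hz (dot_star_self_eq_zero'.mp h)
    have hζre : ζ = ((ζ.re : ℝ) : ℂ) := (dot_star_self_re z).1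
    have hζstar : star ζ = ζ := by rw [hζre]; simp [Complex.star_def, Complex.conj_ofReal]
    set P : Matrix (Fin n) (Fin n) ℂ := vecMulVec z (star z) with hP_def
    have hPH : Pᴴ = P := by
      ext i j
      simp [hP_def, Matrix.conjTranspose_apply, Matrix.vecMulVec_apply, mul_comm]
    have hPP : P * P = ζ • P := by
      ext i j
      simp only [hP_def, Matrix.mul_apply, Matrix.vecMulVec_apply, Matrix.smul_apply,
        smul_eq_mul, hζ_def, dotProduct]
      rw [Finset.sum_mul]
      apply Finset.sum_congr rfl
      intro k _
      ring
    have hPv : P *ᵥ v = (star z ⬝ᵥ v) • z := by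
      ext i
      simp only [hP_def, Matrix.mulVec, dotProduct, Matrix.vecMulVec_apply,
        Pi.smul_apply, smul_eq_mul]
      rw [Finset.sum_mul]
      apply Finset.sum_congr rfl
      intro k _
      ring
    have hzv : ζ = 2 * (star z ⬝ᵥ v) := by
      have hsz : star z = star v - star u := by rw [hz_def, star_sub]
      rw [hζ_def, hsz, hz_def]
      rw [sub_dotProduct, dotProduct_sub, dotProduct_sub,
        sub_dotProduct, hv, hu, ← ht_def, ht']
      ring
    refine ⟨1 - (2 / ζ) • P, ?_, ?_, ?_⟩
    · rw [conjTranspose_sub, conjTranspose_smul, conjTranspose_one, hPH]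
      congr 1
      congr 1
      rw [star_div₀, hζstar]
      norm_num
    · have e2 : 2 / ζ * ζ = 2 := div_mul_cancel₀ 2 hζ0
      have e3 : 2 / ζ * 2 = 2 / ζ + 2 / ζ := by ring
      simp only [Matrix.mul_sub, Matrix.sub_mul, Matrix.one_mul, Matrix.mul_one,
        Matrix.smul_mul, Matrix.mul_smul, hPP, smul_smul]
      rw [e2, smul_sub, smul_smul, e3, add_smul]
      abel
    · rw [Matrix.sub_mulVec, Matrix.one_mulVec, Matrix.smul_mulVec, hPv, smul_smul]
      have hcoef : 2 / ζ * (star z ⬝ᵥ v) = 1 := by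
        have hzv2 : (star z ⬝ᵥ v) = ζ / 2 := by rw [hzv]; ring
        rw [hzv2]
        field_simp
      rw [hcoef, one_smul, hz_def]
      abel
  obtain ⟨Hm, hH1, hH2, hH3⟩ := key
  refine ⟨(c : ℂ) • Hm, ?_, ?_, ?_⟩
  · rw [conjTranspose_smul, hH1]
    simp [Complex.star_def, Complex.conj_ofReal]
  · rw [smul_mulVec, hH3, hyu]
  · rw [conjTranspose_smul, hH1, Matrix.smul_mul, Matrix.mul_smul, hH2, smul_smul]
    simp only [Complex.star_def, Complex.conj_ofReal]
    rw [← sq, hc2]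

lemma skew_map_aux (v w : Fin n → ℂ)
    (hmap : ∃ M : Matrix (Fin n) (Fin n) ℂ, Mᴴ = M ∧ M *ᵥ v = (-Complex.I) • w ∧
      Mᴴ * M = (star ((-Complex.I) • w) ⬝ᵥ ((-Complex.I) • w)) • 1) :
    ∃ N : Matrix (Fin n) (Fin n) ℂ, Nᴴ = -N ∧ N *ᵥ v = w ∧
      Nᴴ * N = (star w ⬝ᵥ w) • 1 := by
  obtain ⟨M, hMH, hMv, hMM⟩ := hmap
  have hyw : star ((-Complex.I) • w) ⬝ᵥ ((-Complex.I) • w) = star w ⬝ᵥ w := by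
    rw [star_smul, smul_dotProduct, dotProduct_smul, smul_smul, smul_eq_mul]
    simp [Complex.star_def]
  refine ⟨Complex.I • M, ?_, ?_, ?_⟩
  · rw [conjTranspose_smul, hMH]
    simp [Complex.star_def, neg_smul]
  · rw [smul_mulVec, hMv, smul_smul]
    simp
  · rw [conjTranspose_smul, hMH, Matrix.smul_mul, Matrix.mul_smul, smul_smul, ← hyw, ← hMM,
      hMH]
    simp [Complex.star_def]

lemma rayleigh_lb {H : Matrix (Fin n) (Fin n) ℂ} (hH : H.IsHermitian) {μ : ℝ}
    (hμ : ∀ i, μ ≤ hH.eigenvalues i) (x : Fin n → ℂ) :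
    μ * (star x ⬝ᵥ x).re ≤ (star x ⬝ᵥ (H *ᵥ x)).re := by
  set U : Matrix (Fin n) (Fin n) ℂ := (hH.eigenvectorUnitary : Matrix (Fin n) (Fin n) ℂ)
    with hU
  have hUU : U * star U = 1 := mem_unitaryGroup_iff.mp hH.eigenvectorUnitary.2
  set yv : Fin n → ℂ := star U *ᵥ x with hyv
  have hstar_yv : star yv = star x ᵥ* U := by
    rw [hyv, Matrix.star_mulVec, Matrix.star_eq_conjTranspose, conjTranspose_conjTranspose]
  have hxy : star x ⬝ᵥ x = star yv ⬝ᵥ yv := by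
    rw [hstar_yv, hyv, ← Matrix.dotProduct_mulVec, Matrix.mulVec_mulVec, hUU,
      Matrix.one_mulVec]
  have hHy : star x ⬝ᵥ (H *ᵥ x) =
      star yv ⬝ᵥ ((diagonal (Complex.ofReal ∘ hH.eigenvalues)) *ᵥ yv) := by
    conv_lhs => rw [hH.spectral_theorem, Unitary.conjStarAlgAut_apply]
    rw [← Matrix.mulVec_mulVec, ← Matrix.mulVec_mulVec, Matrix.dotProduct_mulVec, hstar_yv,
      hyv]
    rfl
  have hdiag : (star yv ⬝ᵥ ((diagonal (Complex.ofReal ∘ hH.eigenvalues)) *ᵥ yv)).re =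
      ∑ i, hH.eigenvalues i * Complex.normSq (yv i) := by
    rw [dotProduct, Complex.re_sum]
    apply Finset.sum_congr rfl
    intro i _
    rw [Matrix.mulVec_diagonal]
    simp [Complex.normSq_apply, Complex.mul_re, Complex.mul_im]
    ring
  have hnsq : (star yv ⬝ᵥ yv).re = ∑ i, Complex.normSq (yv i) := by
    rw [dotProduct, Complex.re_sum]
    apply Finset.sum_congr rfl
    intro i _
    simp [Complex.normSq_apply, Complex.mul_re]
  rw [hHy, hxy, hdiag, hnsq, Finset.mul_sum]
  apply Finset.sum_le_sum
  intro i _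
  exact mul_le_mul_of_nonneg_right (hμ i) (Complex.normSq_nonneg _)

end Aux

/-- For a regular *-odd pencil (A skew-Hermitian, E Hermitian) the structured distance to a common null
space equals `√(λ_min(AᴴA + EᴴE))`. -/
theorem starOdd_distance_to_common_null_space
    {n : ℕ} (A E : Matrix (Fin n) (Fin n) ℂ)
    (hA : Aᴴ = -A) (hE : E.IsHermitian)
    (hreg : ∃ l : ℂ, (A + l • E).det ≠ 0) :
    sInf {r : ℝ | ∃ (DA DE : Matrix (Fin n) (Fin n) ℂ) (v : Fin n → ℂ),
        DAᴴ = -DA ∧ DE.IsHermitian ∧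
        v ≠ 0 ∧ (A - DA).mulVec v = 0 ∧ (E - DE).mulVec v = 0 ∧
        r = Real.sqrt (specNorm DA ^ 2 + specNorm DE ^ 2)} =
      Real.sqrt (lamMin (Aᴴ * A + Eᴴ * E)) := by
  classical
  have hH : (Aᴴ * A + Eᴴ * E).IsHermitian :=
    (Matrix.isHermitian_conjTranspose_mul_self A).add (Matrix.isHermitian_conjTranspose_mul_self E)
  have hlam : lamMin (Aᴴ * A + Eᴴ * E) = ⨅ i, hH.eigenvalues i := by
    rw [lamMin, dif_pos hH]
  rcases Nat.eq_zero_or_pos n with hn | hn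
  · subst hn
    have hempty : {r : ℝ | ∃ (DA DE : Matrix (Fin 0) (Fin 0) ℂ) (v : Fin 0 → ℂ),
        DAᴴ = -DA ∧ DE.IsHermitian ∧
        v ≠ 0 ∧ (A - DA).mulVec v = 0 ∧ (E - DE).mulVec v = 0 ∧
        r = Real.sqrt (specNorm DA ^ 2 + specNorm DE ^ 2)} = ∅ := by
      ext r
      simp only [Set.mem_setOf_eq, Set.mem_empty_iff_false, iff_false]
      rintro ⟨DA, DE, v, -, -, hv0, -⟩
      exact hv0 (Subsingleton.elim v 0)
    rw [hempty, Real.sInf_empty, hlam, Real.iInf_of_isEmpty, Real.sqrt_zero]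
  haveI : Nonempty (Fin n) := Fin.pos_iff_nonempty.mp hn
  obtain ⟨i₀, hi₀⟩ := Finite.exists_min hH.eigenvalues
  set μ : ℝ := hH.eigenvalues i₀ with hμdef
  have hiInf : ⨅ i, hH.eigenvalues i = μ :=
    le_antisymm (ciInf_le (Finite.bddBelow_range _) i₀) (le_ciInf hi₀)
  set v : Fin n → ℂ := ⇑(hH.eigenvectorBasis i₀) with hv_def
  have hvunit : star v ⬝ᵥ v = 1 := by
    have h1 := hH.eigenvectorBasis.orthonormal.1 i₀
    have h2 : (inner ℂ (hH.eigenvectorBasis i₀) (hH.eigenvectorBasis i₀) : ℂ) = star v ⬝ᵥ v :=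
      (EuclideanSpace.inner_eq_star_dotProduct _ _).trans (dotProduct_comm _ _)
    rw [inner_self_eq_norm_sq_to_K, h1] at h2
    simpa using h2.symm
  have hHv : (Aᴴ * A + Eᴴ * E) *ᵥ v = (μ : ℂ) • v := by
    have h := hH.mulVec_eigenvectorBasis i₀
    rw [← hμdef] at h
    rw [h]
    ext i
    simp only [Pi.smul_apply, Complex.real_smul, smul_eq_mul]
    rfl
  have hray : star v ⬝ᵥ ((Aᴴ * A + Eᴴ * E) *ᵥ v) = (μ : ℂ) := by
    rw [hHv, dotProduct_smul, hvunit, smul_eq_mul, mul_one]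
  have hsplit : ∀ w : Fin n → ℂ, star w ⬝ᵥ ((Aᴴ * A + Eᴴ * E) *ᵥ w) =
      star (A *ᵥ w) ⬝ᵥ (A *ᵥ w) + star (E *ᵥ w) ⬝ᵥ (E *ᵥ w) := by
    intro w
    rw [Matrix.add_mulVec, dotProduct_add, dot_conjTranspose_mul_self,
      dot_conjTranspose_mul_self]
  -- Hermitian perturbation for E
  have hrE : star (star v ⬝ᵥ (E *ᵥ v)) = star v ⬝ᵥ (E *ᵥ v) := by
    rw [show (star (star v ⬝ᵥ (E *ᵥ v)) : ℂ) = (starRingEnd ℂ) (star v ⬝ᵥ (E *ᵥ v)) from rfl,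
      conj_dot_mulVec, hE.eq]
  obtain ⟨DE, hDEH, hDEv, hDEM⟩ := herm_map v (E *ᵥ v) hvunit hrE
  -- skew-Hermitian perturbation for A
  have hskew : star (star v ⬝ᵥ (A *ᵥ v)) = -(star v ⬝ᵥ (A *ᵥ v)) := by
    rw [show (star (star v ⬝ᵥ (A *ᵥ v)) : ℂ) = (starRingEnd ℂ) (star v ⬝ᵥ (A *ᵥ v)) from rfl,
      conj_dot_mulVec, hA, Matrix.neg_mulVec, dotProduct_neg]
  have hrA : star (star v ⬝ᵥ ((-Complex.I) • (A *ᵥ v)))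
      = star v ⬝ᵥ ((-Complex.I) • (A *ᵥ v)) := by
    rw [dotProduct_smul, smul_eq_mul, star_mul', hskew]
    simp [Complex.star_def]
  obtain ⟨DA, hDAH, hDAv, hDAM⟩ := skew_map_aux v (A *ᵥ v)
    (herm_map v ((-Complex.I) • (A *ᵥ v)) hvunit hrA)
  set sa2 : ℝ := (star (A *ᵥ v) ⬝ᵥ (A *ᵥ v)).re with hsa2
  set se2 : ℝ := (star (E *ᵥ v) ⬝ᵥ (E *ᵥ v)).re with hse2
  have hsa2nn : 0 ≤ sa2 := (dot_star_self_re _).2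
  have hse2nn : 0 ≤ se2 := (dot_star_self_re _).2
  have hsum : sa2 + se2 = μ := by
    have h := hsplit v
    rw [hray, (dot_star_self_re (A *ᵥ v)).1, (dot_star_self_re (E *ᵥ v)).1] at h
    have := congrArg Complex.re h
    simpa using this.symm
  have hμnn : 0 ≤ μ := by rw [← hsum]; positivity
  have hDAnorm : specNorm DA ≤ Real.sqrt sa2 := by
    apply specNorm_le_of_isometry DA _ (Real.sqrt_nonneg _)
    rw [Real.sq_sqrt hsa2nn, hDAM, (dot_star_self_re (A *ᵥ v)).1]
  have hDEnorm : specNorm DE ≤ Real.sqrt se2 := by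
    apply specNorm_le_of_isometry DE _ (Real.sqrt_nonneg _)
    rw [Real.sq_sqrt hse2nn, hDEM, (dot_star_self_re (E *ᵥ v)).1]
  have hv0 : v ≠ 0 := by
    intro h
    rw [h] at hvunit
    simp at hvunit
  set S : Set ℝ := {r : ℝ | ∃ (DA DE : Matrix (Fin n) (Fin n) ℂ) (v : Fin n → ℂ),
      DAᴴ = -DA ∧ DE.IsHermitian ∧
      v ≠ 0 ∧ (A - DA).mulVec v = 0 ∧ (E - DE).mulVec v = 0 ∧
      r = Real.sqrt (specNorm DA ^ 2 + specNorm DE ^ 2)} with hSdef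
  have hmem : Real.sqrt (specNorm DA ^ 2 + specNorm DE ^ 2) ∈ S := by
    refine ⟨DA, DE, v, hDAH, hDEH, hv0, ?_, ?_, rfl⟩
    · rw [Matrix.sub_mulVec, hDAv, sub_self]
    · rw [Matrix.sub_mulVec, hDEv, sub_self]
  have hr0le : Real.sqrt (specNorm DA ^ 2 + specNorm DE ^ 2) ≤ Real.sqrt μ := by
    apply Real.sqrt_le_sqrt
    have h1 : specNorm DA ^ 2 ≤ sa2 := by
      have h := pow_le_pow_left₀
        (norm_nonneg (Matrix.toEuclideanCLM (𝕜 := ℂ) DA) : (0:ℝ) ≤ specNorm DA) hDAnorm 2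
      rwa [Real.sq_sqrt hsa2nn] at h
    have h2 : specNorm DE ^ 2 ≤ se2 := by
      have h := pow_le_pow_left₀
        (norm_nonneg (Matrix.toEuclideanCLM (𝕜 := ℂ) DE) : (0:ℝ) ≤ specNorm DE) hDEnorm 2
      rwa [Real.sq_sqrt hse2nn] at h
    linarith [hsum]
  have hLB : ∀ r ∈ S, Real.sqrt μ ≤ r := by
    rintro r ⟨DA', DE', w, hDA'H, hDE'H, hw0, hAw, hEw, rfl⟩
    have hAw' : A *ᵥ w = DA' *ᵥ w := by
      rw [← sub_eq_zero, ← Matrix.sub_mulVec]; exact hAw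
    have hEw' : E *ᵥ w = DE' *ᵥ w := by
      rw [← sub_eq_zero, ← Matrix.sub_mulVec]; exact hEw
    set q : ℝ := (star w ⬝ᵥ w).re with hq
    have hqnn : 0 ≤ q := (dot_star_self_re w).2
    have hq0 : 0 < q := by
      rcases hqnn.lt_or_eq with h | h
      · exact h
      · exfalso
        apply hw0
        apply dot_star_self_eq_zero'.mp
        rw [(dot_star_self_re w).1, ← hq, ← h, Complex.ofReal_zero]
    have hray' : μ * q ≤ (star w ⬝ᵥ ((Aᴴ * A + Eᴴ * E) *ᵥ w)).re := rayleigh_lb hH hi₀ w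
    have hq_norm : ‖(WithLp.equiv 2 (Fin n → ℂ)).symm w‖ ^ 2 = q := norm_sq_eq_re_dot w
    have hbound : ∀ X X' : Matrix (Fin n) (Fin n) ℂ, X *ᵥ w = X' *ᵥ w →
        (star (X *ᵥ w) ⬝ᵥ (X *ᵥ w)).re ≤ specNorm X' ^ 2 * q := by
      intro X X' hXX
      rw [hXX, ← norm_sq_eq_re_dot, ← hq_norm]
      have h := norm_mulVec_le X' w
      nlinarith [norm_nonneg ((WithLp.equiv 2 (Fin n → ℂ)).symm (X' *ᵥ w)),
        norm_nonneg ((WithLp.equiv 2 (Fin n → ℂ)).symm w),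
        (norm_nonneg (Matrix.toEuclideanCLM (𝕜 := ℂ) X') : (0:ℝ) ≤ specNorm X')]
    have hsumw : (star w ⬝ᵥ ((Aᴴ * A + Eᴴ * E) *ᵥ w)).re ≤
        (specNorm DA' ^ 2 + specNorm DE' ^ 2) * q := by
      rw [hsplit w, Complex.add_re, add_mul]
      exact add_le_add (hbound A DA' hAw') (hbound E DE' hEw')
    have hfin : μ ≤ specNorm DA' ^ 2 + specNorm DE' ^ 2 := by
      have := le_trans hray' hsumw
      exact le_of_mul_le_mul_right (by linarith) hq0
    exact Real.sqrt_le_sqrt hfin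
  have hSne : S.Nonempty := ⟨_, hmem⟩
  have hbdd : BddBelow S := ⟨Real.sqrt μ, fun r hr => hLB r hr⟩
  rw [hlam, hiInf]
  exact le_antisymm (le_trans (csInf_le hbdd hmem) hr0le) (le_csInf hSne hLB)
end

section
/- Let x, y ∈ ℂⁿ with x ≠ 0. There exists a Hermitian matrix H ∈ ℂ^{n×n} with Hx = y if and only if xᴴy is real (Im(xᴴy) = 0). Moreover, if this condition holds, then the minimum of ‖H‖ over all Hermitian H with Hx = y equals ‖y‖/‖x‖, where ‖H‖ is the spectral norm and ‖·‖ on vectors is the Euclidean norm. -/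
open Matrix

section aux

variable {n : ℕ}

lemma clm_apply_eq_mulVec (H : Matrix (Fin n) (Fin n) ℂ) (x : EuclideanSpace ℂ (Fin n)) :
    Matrix.toEuclideanCLM (𝕜 := ℂ) H x
      = (WithLp.equiv 2 _).symm (H.mulVec ((WithLp.equiv 2 _) x)) :=
  Matrix.toEuclideanLin_apply H x

lemma mulVec_eq_iff (H : Matrix (Fin n) (Fin n) ℂ) (x y : EuclideanSpace ℂ (Fin n)) :
    H.mulVec x = y ↔ Matrix.toEuclideanCLM (𝕜 := ℂ) H x = y := by
  rw [clm_apply_eq_mulVec]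
  exact ⟨fun h => congrArg (WithLp.toLp 2) h, fun h => congrArg WithLp.ofLp h⟩

lemma herm_iff (H : Matrix (Fin n) (Fin n) ℂ) :
    H.IsHermitian ↔ IsSelfAdjoint (Matrix.toEuclideanCLM (𝕜 := ℂ) H) := by
  rw [isSelfAdjoint_iff, ← map_star, EmbeddingLike.apply_eq_iff_eq,
    Matrix.star_eq_conjTranspose]
  exact Iff.rfl

/-- reflection-type operator: `z ↦ ρ • (z - c • (⟪v,z⟫ • v))`. -/
noncomputable def refOp (ρ c : ℝ) (v : EuclideanSpace ℂ (Fin n)) :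
    EuclideanSpace ℂ (Fin n) →L[ℂ] EuclideanSpace ℂ (Fin n) :=
  (ρ : ℂ) • (ContinuousLinearMap.id ℂ _ -
    (c : ℂ) • ((ContinuousLinearMap.toSpanSingleton ℂ v).comp (innerSL ℂ v)))

lemma refOp_apply (ρ c : ℝ) (v z : EuclideanSpace ℂ (Fin n)) :
    refOp ρ c v z = (ρ : ℂ) • (z - ((c : ℂ) * (inner ℂ v z : ℂ)) • v) := by
  simp only [refOp, ContinuousLinearMap.coe_smul', ContinuousLinearMap.coe_sub',
    Pi.smul_apply, Pi.sub_apply, ContinuousLinearMap.coe_id', id_eq,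
    ContinuousLinearMap.coe_comp', Function.comp_apply,
    ContinuousLinearMap.toSpanSingleton_apply, innerSL_apply_apply, smul_smul]

lemma refOp_selfAdjoint (ρ c : ℝ) (v : EuclideanSpace ℂ (Fin n)) :
    IsSelfAdjoint (refOp ρ c v) := by
  rw [ContinuousLinearMap.isSelfAdjoint_iff_isSymmetric]
  intro a b
  simp only [ContinuousLinearMap.coe_coe, refOp_apply]
  simp only [inner_smul_left, inner_smul_right, inner_sub_left, inner_sub_right,
    Complex.conj_ofReal, _root_.map_mul, inner_conj_symm]
  ring

lemma refOp_norm_le (ρ : ℝ) (hρ : 0 ≤ ρ) (v : EuclideanSpace ℂ (Fin n)) :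
    ‖refOp ρ (2 / ‖v‖ ^ 2) v‖ ≤ ρ := by
  apply ContinuousLinearMap.opNorm_le_bound _ hρ
  intro z
  rw [refOp_apply, norm_smul]
  have h0 : ‖((ρ : ℝ) : ℂ)‖ = ρ := by
    simp [Complex.norm_real, abs_of_nonneg hρ]
  rw [h0]
  gcongr
  rcases eq_or_ne v 0 with hv | hv
  · simp [hv]
  · have hv2 : (0:ℝ) < ‖v‖ ^ 2 := pow_pos (norm_pos_iff.mpr hv) 2
    set c : ℝ := 2 / ‖v‖ ^ 2 with hc
    set I : ℂ := (inner ℂ v z : ℂ) with hI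
    have key : ‖z - ((c : ℂ) * I) • v‖ ^ 2 = ‖z‖ ^ 2 := by
      rw [@norm_sub_sq ℂ]
      have h1 : (inner ℂ z (((c : ℂ) * I) • v) : ℂ) = (c : ℂ) * (Complex.normSq I : ℂ) := by
        rw [inner_smul_right, mul_assoc]
        rw [show (inner ℂ z v : ℂ) = (starRingEnd ℂ) I by rw [hI, inner_conj_symm]]
        rw [Complex.mul_conj]
      rw [h1]
      have h2 : ‖((c : ℂ) * I) • v‖ ^ 2 = c ^ 2 * Complex.normSq I * ‖v‖ ^ 2 := by
        rw [norm_smul, norm_mul, Complex.norm_real, Real.norm_eq_abs]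
        rw [abs_of_nonneg (le_of_lt (by rw [hc]; positivity) : (0:ℝ) ≤ c)]
        rw [mul_pow, mul_pow, Complex.sq_norm]
      rw [h2]
      have h3 : RCLike.re ((c : ℂ) * (Complex.normSq I : ℂ)) = c * Complex.normSq I := by
        rw [← Complex.ofReal_mul]
        simp
      rw [h3, hc]
      field_simp
      ring
    refine le_of_eq ?_
    rw [← Real.sqrt_sq (norm_nonneg (z - ((c:ℂ) * I) • v)), key,
      Real.sqrt_sq (norm_nonneg z)]

lemma two_inner_key (x y : EuclideanSpace ℂ (Fin n)) (hx : x ≠ 0) (hy : y ≠ 0)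
    (him : (inner ℂ x y : ℂ).im = 0) :
    2 * (inner ℂ (x - (((‖y‖ / ‖x‖ : ℝ) : ℂ))⁻¹ • y) x : ℂ)
      = ((‖x - (((‖y‖ / ‖x‖ : ℝ) : ℂ))⁻¹ • y‖ ^ 2 : ℝ) : ℂ) := by
  have ha : (0:ℝ) < ‖x‖ := norm_pos_iff.mpr hx
  have hb : (0:ℝ) < ‖y‖ := norm_pos_iff.mpr hy
  set ρ : ℝ := ‖y‖ / ‖x‖ with hρdef
  have hρpos : (0:ℝ) < ρ := by rw [hρdef]; positivity
  have hρ0 : ρ ≠ 0 := ne_of_gt hρpos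
  set v : EuclideanSpace ℂ (Fin n) := x - ((ρ : ℂ))⁻¹ • y with hvdef
  set t : ℂ := (inner ℂ x y : ℂ) with htdef
  have him' : t.im = 0 := him
  clear_value ρ v t
  have ht : t = (t.re : ℂ) := Complex.ext rfl (by simpa using him')
  have hvx : (inner ℂ v x : ℂ) = ((‖x‖ ^ 2 : ℝ) : ℂ) - (ρ⁻¹ : ℝ) * t := by
    rw [hvdef, inner_sub_left, inner_smul_left, inner_self_eq_norm_sq_to_K]
    rw [show (inner ℂ y x : ℂ) = (starRingEnd ℂ) t by rw [htdef, inner_conj_symm]]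
    rw [Complex.conj_eq_iff_im.mpr him']
    simp only [map_inv₀, Complex.conj_ofReal, RCLike.ofReal_alg, Complex.real_smul,
      Complex.coe_algebraMap]
    push_cast
    ring
  have hnv : (‖v‖ ^ 2 : ℝ) = 2 * ‖x‖ ^ 2 - 2 * ρ⁻¹ * t.re := by
    rw [hvdef, @norm_sub_sq ℂ]
    have h1 : (inner ℂ x (((ρ : ℂ))⁻¹ • y) : ℂ) = (ρ⁻¹ : ℝ) * t := by
      rw [inner_smul_right, ← htdef]; push_cast; ring
    rw [h1]
    have h2 : ‖((ρ : ℂ))⁻¹ • y‖ ^ 2 = ‖x‖ ^ 2 := by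
      rw [norm_smul]
      simp only [norm_inv, Complex.norm_real, Real.norm_eq_abs, abs_of_pos hρpos]
      rw [hρdef]
      field_simp
    rw [h2]
    simp [Complex.ofReal_mul]
    ring
  rw [hvx, hnv, ht]
  push_cast
  simp only [Complex.ofReal_re]
  ring

lemma exists_herm (x y : EuclideanSpace ℂ (Fin n)) (hx : x ≠ 0)
    (him : (inner ℂ x y : ℂ).im = 0) :
    ∃ H : Matrix (Fin n) (Fin n) ℂ,
      H.IsHermitian ∧ H.mulVec x = y ∧ specNorm H ≤ ‖y‖ / ‖x‖ := by
  have ha : (0:ℝ) < ‖x‖ := norm_pos_iff.mpr hx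
  set ρ : ℝ := ‖y‖ / ‖x‖ with hρdef
  have hρnn : (0:ℝ) ≤ ρ := by rw [hρdef]; positivity
  set v : EuclideanSpace ℂ (Fin n) := x - ((ρ : ℂ))⁻¹ • y with hvdef
  have hTx : refOp ρ (2 / ‖v‖ ^ 2) v x = y := by
    rcases eq_or_ne y 0 with hy | hy
    · have hρz : ρ = 0 := by rw [hρdef, hy]; simp
      rw [refOp_apply, hρz, hy]
      simp
    · have hρ0 : ρ ≠ 0 := by
        rw [hρdef]
        exact ne_of_gt (div_pos (norm_pos_iff.mpr hy) ha)
      have hρC : ((ρ : ℝ) : ℂ) ≠ 0 := Complex.ofReal_ne_zero.mpr hρ0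
      rw [refOp_apply]
      rcases eq_or_ne v 0 with hv | hv
      · have hxv : x = ((ρ : ℂ))⁻¹ • y := by rwa [hvdef, sub_eq_zero] at hv
        rw [hv]
        simp only [inner_zero_left, mul_zero, zero_smul, sub_zero]
        rw [hxv, smul_smul, mul_inv_cancel₀ hρC, one_smul]
      · have hv2 : (0:ℝ) < ‖v‖ ^ 2 := pow_pos (norm_pos_iff.mpr hv) 2
        have key := two_inner_key x y hx hy him
        rw [← hρdef, ← hvdef] at key
        have hone : ((2 / ‖v‖ ^ 2 : ℝ) : ℂ) * (inner ℂ v x : ℂ) = 1 := by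
          have hvx : (inner ℂ v x : ℂ) = ((‖v‖ ^ 2 : ℝ) : ℂ) / 2 := by
            rw [eq_div_iff (by norm_num : (2:ℂ) ≠ 0), mul_comm, ← key]
          have hvC : ((‖v‖ : ℝ) : ℂ) ≠ 0 := by
            exact_mod_cast (norm_pos_iff.mpr hv).ne'
          rw [hvx]
          push_cast
          field_simp
        rw [hone, one_smul, hvdef, sub_sub_cancel, smul_smul, mul_inv_cancel₀ hρC,
          one_smul]
  refine ⟨(Matrix.toEuclideanCLM (𝕜 := ℂ)).symm (refOp ρ (2 / ‖v‖ ^ 2) v), ?_, ?_, ?_⟩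
  · rw [herm_iff, StarAlgEquiv.apply_symm_apply]
    exact refOp_selfAdjoint _ _ _
  · rw [mulVec_eq_iff, StarAlgEquiv.apply_symm_apply]
    exact hTx
  · exact le_of_eq_of_le (congrArg norm (StarAlgEquiv.apply_symm_apply _ _))
      (refOp_norm_le ρ hρnn v)

end aux

/-- Hermitian mapping lemma: for `x ≠ 0` there is a Hermitian `H` with `Hx = y`
iff `xᴴy` is real, in which case the minimal spectral norm of such `H` is
`‖y‖/‖x‖`. -/
theorem hermitian_mapping {n : ℕ} (x y : EuclideanSpace ℂ (Fin n)) (hx : x ≠ 0) :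
    ((∃ H : Matrix (Fin n) (Fin n) ℂ, H.IsHermitian ∧ H.mulVec x = y) ↔
      (inner ℂ x y : ℂ).im = 0) ∧
    ((inner ℂ x y : ℂ).im = 0 →
      IsLeast {r : ℝ | ∃ H : Matrix (Fin n) (Fin n) ℂ,
          H.IsHermitian ∧ H.mulVec x = y ∧ r = specNorm H}
        (‖y‖ / ‖x‖)) := by
  have ha : (0:ℝ) < ‖x‖ := norm_pos_iff.mpr hx
  have fwd : (∃ H : Matrix (Fin n) (Fin n) ℂ, H.IsHermitian ∧ H.mulVec x = y) →
      (inner ℂ x y : ℂ).im = 0 := by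
    rintro ⟨H, hH, hHx⟩
    rw [mulVec_eq_iff] at hHx
    set T := Matrix.toEuclideanCLM (𝕜 := ℂ) H with hT
    have hsym := ContinuousLinearMap.isSelfAdjoint_iff_isSymmetric.mp ((herm_iff H).mp hH)
    have h1 : (inner ℂ x y : ℂ) = inner ℂ x (T x) := by rw [hHx]
    have h2 : (starRingEnd ℂ) (inner ℂ x (T x) : ℂ) = (inner ℂ x (T x) : ℂ) := by
      calc (starRingEnd ℂ) (inner ℂ x (T x) : ℂ) = (inner ℂ (T x) x : ℂ) := inner_conj_symm _ _
        _ = (inner ℂ x (T x) : ℂ) := hsym x x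
    rw [h1]
    exact Complex.conj_eq_iff_im.mp h2
  have lb : ∀ r ∈ {r : ℝ | ∃ H : Matrix (Fin n) (Fin n) ℂ,
      H.IsHermitian ∧ H.mulVec x = y ∧ r = specNorm H}, ‖y‖ / ‖x‖ ≤ r := by
    rintro r ⟨H, hH, hHx, rfl⟩
    rw [mulVec_eq_iff] at hHx
    rw [div_le_iff₀ ha]
    calc ‖y‖ = ‖Matrix.toEuclideanCLM (𝕜 := ℂ) H x‖ := by rw [hHx]
      _ ≤ ‖Matrix.toEuclideanCLM (𝕜 := ℂ) H‖ * ‖x‖ :=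
        ContinuousLinearMap.le_opNorm _ x
  refine ⟨⟨fwd, fun him => ?_⟩, fun him => ?_⟩
  · obtain ⟨H, h1, h2, _⟩ := exists_herm x y hx him
    exact ⟨H, h1, h2⟩
  · obtain ⟨H, h1, h2, h3⟩ := exists_herm x y hx him
    exact ⟨⟨H, h1, h2, le_antisymm (lb _ ⟨H, h1, h2, rfl⟩) h3⟩, lb⟩
end

section
/- Let x, y, z ∈ ℂⁿ with x ≠ 0. There exists a matrix Δ ∈ ℂ^{n×n} such that Δx = y and Δᴴx = z if and only if xᴴy = zᴴx. Moreover, if this condition holds, then the minimum of ‖Δ‖ over all Δ ∈ ℂ^{n×n} with Δx = y and Δᴴx = z equals max{‖y‖/‖x‖, ‖z‖/‖x‖}, where ‖Δ‖ is the spectral norm. -/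
open Matrix ContinuousLinearMap

section OperatorLemmas

local notation "⟪" x ", " y "⟫" => @inner ℂ _ _ x y

variable {E : Type*} [NormedAddCommGroup E] [InnerProductSpace ℂ E] [CompleteSpace E]

omit [CompleteSpace E] in
lemma pyth_two (u w : E) (h : ⟪u, w⟫ = 0) : ‖u + w‖ ^ 2 = ‖u‖ ^ 2 + ‖w‖ ^ 2 := by
  rw [norm_add_sq (𝕜 := ℂ), h]; simp

omit [CompleteSpace E] in
lemma bessel_two (a b v : E) (ha : a ≠ 0) (hb : b ≠ 0) (hab : ⟪a, b⟫ = 0) :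
    ‖⟪a, v⟫‖ ^ 2 / ‖a‖ ^ 2 + ‖⟪b, v⟫‖ ^ 2 / ‖b‖ ^ 2 ≤ ‖v‖ ^ 2 := by
  have ha' : (‖a‖ : ℝ) ≠ 0 := norm_ne_zero_iff.mpr ha
  have hb' : (‖b‖ : ℝ) ≠ 0 := norm_ne_zero_iff.mpr hb
  have hba : ⟪b, a⟫ = 0 := by rw [← inner_conj_symm, hab, map_zero]
  have hortho : Orthonormal ℂ ![((‖a‖ : ℂ))⁻¹ • a, ((‖b‖ : ℂ))⁻¹ • b] := by
    rw [orthonormal_iff_ite]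
    intro i j
    fin_cases i <;> fin_cases j <;>
      simp [inner_smul_left, inner_smul_right, hab, hba, norm_smul, ha', hb', inner_self_eq_norm_sq_to_K]
  have h := hortho.sum_inner_products_le (s := Finset.univ) v
  rw [Fin.sum_univ_two] at h
  simp only [Matrix.cons_val_zero, Matrix.cons_val_one, Matrix.head_cons] at h
  rw [inner_smul_left, inner_smul_left] at h
  simp only [norm_mul, map_inv₀, norm_inv, Complex.conj_ofReal, Complex.norm_real, norm_norm,
    mul_pow] at h
  calc ‖⟪a, v⟫‖ ^ 2 / ‖a‖ ^ 2 + ‖⟪b, v⟫‖ ^ 2 / ‖b‖ ^ 2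
      = ‖a‖⁻¹ ^ 2 * ‖⟪a, v⟫‖ ^ 2 + ‖b‖⁻¹ ^ 2 * ‖⟪b, v⟫‖ ^ 2 := by field_simp
    _ ≤ ‖v‖ ^ 2 := h

lemma arith_key (s t Y Z B V : ℝ) (hB : 0 < B) (hZ : 0 < Z) (ht : 0 ≤ t)
    (hbess : s / Z + t / B ≤ V) (hcoef : Y * B ≤ Z) : s + t * Y ≤ Z * V := by
  have hb2 : s * B + Z * t ≤ V * (Z * B) := by
    rw [div_add_div _ _ (ne_of_gt hZ) (ne_of_gt hB), div_le_iff₀ (by positivity)] at hbess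
    linarith
  have h4 : t * (Y * B) ≤ t * Z := mul_le_mul_of_nonneg_left hcoef ht
  have h3 : (s + t * Y) * B ≤ (Z * V) * B := by nlinarith
  exact le_of_mul_le_mul_right h3 hB

lemma aux_exists (x y z : E) (hx : ‖x‖ = 1) (hyz : ‖y‖ ≤ ‖z‖) (hc : ⟪x, y⟫ = ⟪z, x⟫) :
    ∃ T : E →L[ℂ] E, T x = y ∧ adjoint T x = z ∧ ‖T‖ ≤ ‖z‖ := by
  set α : ℂ := ⟪x, y⟫ with hα
  have hxx : ⟪x, x⟫ = 1 := by
    rw [inner_self_eq_norm_sq_to_K, hx]; norm_num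
  set y1 : E := y - α • x with hy1
  set z1 : E := z - (starRingEnd ℂ α) • x with hz1
  have hxy1 : ⟪x, y1⟫ = 0 := by
    simp [hy1, inner_sub_right, inner_smul_right, hxx, ← hα, hx]
  have hy1x : ⟪y1, x⟫ = 0 := by rw [← inner_conj_symm, hxy1, map_zero]
  have hzx : ⟪z, x⟫ = α := hc.symm
  have hz1x : ⟪z1, x⟫ = 0 := by
    simp [hz1, inner_sub_left, inner_smul_left, hxx, hzx, hx]
  have hxz1 : ⟪x, z1⟫ = 0 := by rw [← inner_conj_symm, hz1x, map_zero]
  have hyd : y = α • x + y1 := by simp [hy1]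
  have hzd : z = (starRingEnd ℂ α) • x + z1 := by simp [hz1]
  have hny : ‖y‖ ^ 2 = ‖α‖ ^ 2 + ‖y1‖ ^ 2 := by
    rw [hyd, pyth_two _ _ (by rw [inner_smul_left, hxy1, mul_zero]), norm_smul, hx]
    simp
  have hnz : ‖z‖ ^ 2 = ‖α‖ ^ 2 + ‖z1‖ ^ 2 := by
    rw [hzd, pyth_two _ _ (by rw [inner_smul_left, hxz1, mul_zero]), norm_smul, hx]
    simp
  by_cases hz10 : z1 = 0
  · -- rank one case : T = x ↦ ⟪x,·⟫ • y
    refine ⟨(innerSL ℂ x).smulRight y, by simp [hxx, hx], ?_, ?_⟩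
    · have hadj : (innerSL ℂ y).smulRight x = adjoint ((innerSL ℂ x).smulRight y) := by
        rw [eq_adjoint_iff]
        intro u v
        simp only [ContinuousLinearMap.smulRight_apply, innerSL_apply_apply, inner_smul_left,
          inner_smul_right, inner_conj_symm]
        ring
      rw [← hadj]
      have hyx : ⟪y, x⟫ = starRingEnd ℂ α := by rw [← inner_conj_symm, ← hα]
      simp [hyx]
      rw [hzd, hz10, add_zero]
    · refine opNorm_le_bound _ (norm_nonneg z) fun v => ?_
      have h1 : ‖((innerSL ℂ x).smulRight y) v‖ = ‖⟪x, v⟫‖ * ‖y‖ := by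
        simp [norm_smul]
      rw [h1]
      have h2 : ‖⟪x, v⟫‖ ≤ ‖v‖ := by
        have := norm_inner_le_norm (𝕜 := ℂ) x v
        rwa [hx, one_mul] at this
      have h3 : ‖y‖ ≤ ‖z‖ := hyz
      have := mul_le_mul h2 h3 (norm_nonneg y) (norm_nonneg v)
      linarith [this]
  · -- main case: z1 ≠ 0
    have hz1n : (0:ℝ) < ‖z1‖ := norm_pos_iff.mpr hz10
    have hz1nC : ((‖z1‖:ℂ)) ≠ 0 := by
      simp [ne_of_gt hz1n]
    set c : ℂ := α / ((‖z1‖:ℂ)) ^ 2 with hcdef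
    set b : E := x - c • z1 with hbdef
    have hbx : ⟪b, x⟫ = 1 := by
      simp [hbdef, inner_sub_left, inner_smul_left, hxx, hz1x, hx]
    have hxb : ⟪x, b⟫ = 1 := by
      rw [← inner_conj_symm, hbx]; simp
    have hbne : b ≠ 0 := by
      intro h0
      rw [h0, inner_zero_left] at hbx
      exact one_ne_zero hbx.symm
    have hzz1 : ⟪z, z1⟫ = ((‖z1‖:ℂ)) ^ 2 := by
      rw [hzd, inner_add_left, inner_smul_left, hxz1, mul_zero, zero_add,
        inner_self_eq_norm_sq_to_K]
      norm_cast
    have hzb : ⟪z, b⟫ = 0 := by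
      rw [hbdef, inner_sub_right, inner_smul_right, hzx, hzz1, hcdef]
      field_simp
      ring
    have hbz : ⟪b, z⟫ = 0 := by rw [← inner_conj_symm, hzb, map_zero]
    have hzne : z ≠ 0 := by
      intro h0
      rw [h0, norm_zero] at hnz
      nlinarith [sq_nonneg ‖α‖]
    have hzn : (0:ℝ) < ‖z‖ := norm_pos_iff.mpr hzne
    have hnb : ‖b‖ ^ 2 = 1 + ‖α‖ ^ 2 / ‖z1‖ ^ 2 := by
      have : b = x + (-c) • z1 := by rw [hbdef, neg_smul, sub_eq_add_neg]
      rw [this, pyth_two _ _ (by rw [inner_smul_right, hxz1, mul_zero]), norm_smul, hx]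
      have hcn : ‖-c‖ = ‖α‖ / ‖z1‖ ^ 2 := by
        rw [norm_neg, hcdef, norm_div, norm_pow, Complex.norm_real, norm_norm]
      rw [hcn]
      field_simp
    have hy1z1 : ‖y1‖ ^ 2 ≤ ‖z1‖ ^ 2 := by
      have : ‖y‖ ^ 2 ≤ ‖z‖ ^ 2 := by
        nlinarith [norm_nonneg y, norm_nonneg z]
      linarith [hny, hnz]
    -- coefficient bound
    have hcoef : ‖y1‖ ^ 2 * ‖b‖ ^ 2 ≤ ‖z‖ ^ 2 := by
      rw [hnb, hnz]
      have h1 : ‖y1‖ ^ 2 * (‖α‖ ^ 2 / ‖z1‖ ^ 2) ≤ ‖α‖ ^ 2 := by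
        rw [div_eq_mul_inv]
        have := mul_le_mul_of_nonneg_right hy1z1 (by positivity : (0:ℝ) ≤ ‖α‖ ^ 2 * (‖z1‖ ^ 2)⁻¹)
        calc ‖y1‖ ^ 2 * (‖α‖ ^ 2 * (‖z1‖ ^ 2)⁻¹) ≤ ‖z1‖ ^ 2 * (‖α‖ ^ 2 * (‖z1‖ ^ 2)⁻¹) := this
          _ = ‖α‖ ^ 2 := by field_simp
      nlinarith
    refine ⟨(innerSL ℂ z).smulRight x + (innerSL ℂ b).smulRight y1, ?_, ?_, ?_⟩
    · simp [hzx, hbx, ← hyd]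
    · have hadj : (innerSL ℂ x).smulRight z + (innerSL ℂ y1).smulRight b =
          adjoint ((innerSL ℂ z).smulRight x + (innerSL ℂ b).smulRight y1) := by
        rw [eq_adjoint_iff]
        intro u v
        simp only [ContinuousLinearMap.add_apply, ContinuousLinearMap.smulRight_apply,
          innerSL_apply_apply, inner_add_left, inner_add_right, inner_smul_left, inner_smul_right,
          inner_conj_symm]
        ring
      rw [← hadj]
      simp [hxx, hy1x, hx]
    · refine opNorm_le_bound _ (norm_nonneg z) fun v => ?_
      have hTv : ((innerSL ℂ z).smulRight x + (innerSL ℂ b).smulRight y1) v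
          = ⟪z, v⟫ • x + ⟪b, v⟫ • y1 := by simp
      have hnorm2 : ‖⟪z, v⟫ • x + ⟪b, v⟫ • y1‖ ^ 2
          = ‖⟪z, v⟫‖ ^ 2 + ‖⟪b, v⟫‖ ^ 2 * ‖y1‖ ^ 2 := by
        rw [pyth_two _ _ (by rw [inner_smul_left, inner_smul_right, hxy1]; ring),
          norm_smul, norm_smul, hx]
        ring
      have hbess := bessel_two z b v hzne hbne hzb
      have hbn : (0:ℝ) < ‖b‖ ^ 2 := pow_pos (norm_pos_iff.mpr hbne) 2
      have hzn2 : (0:ℝ) < ‖z‖ ^ 2 := pow_pos hzn 2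
      have key : ‖⟪z, v⟫ • x + ⟪b, v⟫ • y1‖ ^ 2 ≤ (‖z‖ * ‖v‖) ^ 2 := by
        rw [hnorm2, mul_pow]
        exact arith_key _ _ _ _ _ _ hbn hzn2 (sq_nonneg _) hbess hcoef
      rw [hTv]
      have h0 : (0:ℝ) ≤ ‖z‖ * ‖v‖ := by positivity
      exact le_of_pow_le_pow_left₀ (by norm_num) h0 key

lemma exists_clm_unit (x y z : E) (hx : ‖x‖ = 1) (hc : ⟪x, y⟫ = ⟪z, x⟫) :
    ∃ T : E →L[ℂ] E, T x = y ∧ adjoint T x = z ∧ ‖T‖ ≤ max ‖y‖ ‖z‖ := by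
  rcases le_total ‖y‖ ‖z‖ with h | h
  · obtain ⟨T, h1, h2, h3⟩ := aux_exists x y z hx h hc
    exact ⟨T, h1, h2, h3.trans (le_max_right _ _)⟩
  · have hc' : ⟪x, z⟫ = ⟪y, x⟫ := by
      rw [← inner_conj_symm, ← hc, inner_conj_symm]
    obtain ⟨T, h1, h2, h3⟩ := aux_exists x z y hx h hc'
    refine ⟨adjoint T, h2, ?_, ?_⟩
    · rw [adjoint_adjoint]; exact h1
    · have hnorm : ‖adjoint T‖ = ‖T‖ :=
        (ContinuousLinearMap.adjoint : (E →L[ℂ] E) ≃ₗᵢ⋆[ℂ] (E →L[ℂ] E)).norm_map T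
      rw [hnorm]
      exact h3.trans (le_max_left _ _)

lemma exists_clm (x y z : E) (hx : x ≠ 0) (hc : ⟪x, y⟫ = ⟪z, x⟫) :
    ∃ T : E →L[ℂ] E, T x = y ∧ adjoint T x = z ∧ ‖T‖ ≤ max (‖y‖ / ‖x‖) (‖z‖ / ‖x‖) := by
  have hxn : (0:ℝ) < ‖x‖ := norm_pos_iff.mpr hx
  set c : ℂ := ((‖x‖ : ℂ))⁻¹ with hcdef
  have hcne : c ≠ 0 := by
    simp [hcdef, ne_of_gt hxn]
  have hcnorm : ‖c‖ = ‖x‖⁻¹ := by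
    rw [hcdef, norm_inv, Complex.norm_real, norm_norm]
  have hnu : ‖c • x‖ = 1 := by
    rw [norm_smul, hcnorm, inv_mul_cancel₀ (ne_of_gt hxn)]
  have hc' : ⟪c • x, c • y⟫ = ⟪c • z, c • x⟫ := by
    rw [inner_smul_left, inner_smul_right, inner_smul_left, inner_smul_right, hc]
    try ring
  obtain ⟨T, h1, h2, h3⟩ := exists_clm_unit (c • x) (c • y) (c • z) hnu hc'
  rw [ContinuousLinearMap.map_smul] at h1 h2
  refine ⟨T, smul_right_injective E hcne h1, smul_right_injective E hcne h2, ?_⟩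
  have hny : ‖c • y‖ = ‖y‖ / ‖x‖ := by rw [norm_smul, hcnorm, div_eq_inv_mul]
  have hnz : ‖c • z‖ = ‖z‖ / ‖x‖ := by rw [norm_smul, hcnorm, div_eq_inv_mul]
  rwa [hny, hnz] at h3


end OperatorLemmas

section Main

local notation "⟪" x ", " y "⟫" => @inner ℂ _ _ x y

/-- Two-sided mapping lemma: for `x ≠ 0` there exists `Δ` with `Δx = y` and
`Δᴴx = z` iff `xᴴy = zᴴx`, in which case the minimal spectral norm of such `Δ`
is `max{‖y‖/‖x‖, ‖z‖/‖x‖}`. -/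
theorem two_sided_mapping {n : ℕ} (x y z : EuclideanSpace ℂ (Fin n)) (hx : x ≠ 0) :
    ((∃ D : Matrix (Fin n) (Fin n) ℂ, D.mulVec x = y ∧ Dᴴ.mulVec x = z) ↔
      (inner ℂ x y : ℂ) = (inner ℂ z x : ℂ)) ∧
    ((inner ℂ x y : ℂ) = (inner ℂ z x : ℂ) →
      IsLeast {r : ℝ | ∃ D : Matrix (Fin n) (Fin n) ℂ,
          D.mulVec x = y ∧ Dᴴ.mulVec x = z ∧ r = specNorm D}
        (max (‖y‖ / ‖x‖) (‖z‖ / ‖x‖))) := by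
  have hxn : (0:ℝ) < ‖x‖ := norm_pos_iff.mpr hx
  have bridge : ∀ (D : Matrix (Fin n) (Fin n) ℂ) (v w : EuclideanSpace ℂ (Fin n)),
      Matrix.toEuclideanCLM (𝕜 := ℂ) D v = w ↔ D.mulVec v = w := fun D v w =>
      ⟨fun h => by rw [← h]; rfl, fun h => by cases w; exact congrArg (WithLp.toLp 2) h⟩
  have hstar : ∀ D : Matrix (Fin n) (Fin n) ℂ,
      Matrix.toEuclideanCLM (𝕜 := ℂ) Dᴴ = adjoint (Matrix.toEuclideanCLM (𝕜 := ℂ) D) := by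
    intro D
    rw [← star_eq_adjoint, ← map_star]
    rfl
  -- forward direction of the iff
  have fwd : (∃ D : Matrix (Fin n) (Fin n) ℂ, D.mulVec x = y ∧ Dᴴ.mulVec x = z) →
      ⟪x, y⟫ = ⟪z, x⟫ := by
    rintro ⟨D, hD1, hD2⟩
    set T := Matrix.toEuclideanCLM (𝕜 := ℂ) D with hT
    have h1 : T x = y := (bridge D x y).mpr hD1
    have h2 : adjoint T x = z := by
      rw [← hstar D]; exact (bridge Dᴴ x z).mpr hD2
    rw [← h1, ← h2, ContinuousLinearMap.adjoint_inner_left]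
  -- existence of a matrix achieving the bound
  have bwd : ⟪x, y⟫ = ⟪z, x⟫ → ∃ D : Matrix (Fin n) (Fin n) ℂ,
      D.mulVec x = y ∧ Dᴴ.mulVec x = z ∧ specNorm D ≤ max (‖y‖ / ‖x‖) (‖z‖ / ‖x‖) := by
    intro hc
    obtain ⟨T, h1, h2, h3⟩ := exists_clm x y z hx hc
    refine ⟨(Matrix.toEuclideanCLM (𝕜 := ℂ)).symm T, ?_, ?_, ?_⟩
    · rw [← bridge]
      rw [StarAlgEquiv.apply_symm_apply]
      exact h1
    · rw [← bridge, hstar, StarAlgEquiv.apply_symm_apply]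
      exact h2
    · unfold specNorm
      rw [StarAlgEquiv.apply_symm_apply]
      exact h3
  -- lower bound
  have lb : ∀ r ∈ {r : ℝ | ∃ D : Matrix (Fin n) (Fin n) ℂ,
      D.mulVec x = y ∧ Dᴴ.mulVec x = z ∧ r = specNorm D},
      max (‖y‖ / ‖x‖) (‖z‖ / ‖x‖) ≤ r := by
    rintro r ⟨D, hD1, hD2, hr⟩
    set T := Matrix.toEuclideanCLM (𝕜 := ℂ) D with hT
    have h1 : T x = y := (bridge D x y).mpr hD1
    have h2 : adjoint T x = z := by
      rw [← hstar D]; exact (bridge Dᴴ x z).mpr hD2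
    have hy : ‖y‖ ≤ ‖T‖ * ‖x‖ := by rw [← h1]; exact T.le_opNorm x
    have hz : ‖z‖ ≤ ‖T‖ * ‖x‖ := by
      rw [← h2]
      refine ((adjoint T).le_opNorm x).trans ?_
      have : ‖adjoint T‖ = ‖T‖ :=
        (ContinuousLinearMap.adjoint :
          (EuclideanSpace ℂ (Fin n) →L[ℂ] EuclideanSpace ℂ (Fin n)) ≃ₗᵢ⋆[ℂ] _).norm_map T
      rw [this]
    have hrT : r = ‖T‖ := hr
    rw [hrT]
    refine max_le ?_ ?_
    · rw [div_le_iff₀ hxn]; linarith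
    · rw [div_le_iff₀ hxn]; linarith
  constructor
  · constructor
    · exact fwd
    · intro hc
      obtain ⟨D, hD1, hD2, _⟩ := bwd hc
      exact ⟨D, hD1, hD2⟩
  · intro hc
    obtain ⟨D, hD1, hD2, hD3⟩ := bwd hc
    have hmem : specNorm D ∈ {r : ℝ | ∃ D : Matrix (Fin n) (Fin n) ℂ,
        D.mulVec x = y ∧ Dᴴ.mulVec x = z ∧ r = specNorm D} := ⟨D, hD1, hD2, rfl⟩
    have heq : specNorm D = max (‖y‖ / ‖x‖) (‖z‖ / ‖x‖) :=
      le_antisymm hD3 (lb _ hmem)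
    exact ⟨⟨D, hD1, hD2, heq.symm⟩, lb⟩

end Main
end

section
/- Let x, y ∈ ℂⁿ be nonzero. There exists a Hermitian negative semidefinite matrix Δ ∈ ℂ^{n×n} (Δ ⪯ 0) with Δx = y if and only if xᴴy is a negative real number. Moreover, if this condition holds, then the minimum of ‖Δ‖ over all negative semidefinite Δ with Δx = y equals ‖y‖²/|xᴴy|, and this minimum is attained by the rank-one matrix Δ̃ = (1/(xᴴy)) · y yᴴ. -/
open Matrix
open scoped ComplexOrder

section Aux

variable {n : ℕ}

lemma aux_clm_apply (A : Matrix (Fin n) (Fin n) ℂ) (v : EuclideanSpace ℂ (Fin n)) :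
    (Matrix.toEuclideanCLM (𝕜 := ℂ) A) v = (WithLp.equiv 2 _).symm (A *ᵥ (WithLp.equiv 2 _ v)) :=
  rfl

lemma aux_inner (x y : EuclideanSpace ℂ (Fin n)) :
    (inner ℂ x y : ℂ) = star (WithLp.equiv 2 _ x) ⬝ᵥ (WithLp.equiv 2 _ y) := by
  rw [EuclideanSpace.inner_eq_star_dotProduct, dotProduct_comm]; rfl

lemma aux_vecMulVec_mulVec (w v u : Fin n → ℂ) : (vecMulVec w v) *ᵥ u = (v ⬝ᵥ u) • w := by
  ext i
  simp only [vecMulVec_apply, mulVec, dotProduct, Pi.smul_apply, smul_eq_mul, Finset.sum_mul]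
  exact Finset.sum_congr rfl fun j _ => by ring

lemma aux_rankOne_psd (t : ℝ) (ht : 0 ≤ t) (y : Fin n → ℂ) :
    ((t : ℂ) • vecMulVec y (star y)).PosSemidef := by
  refine PosSemidef.of_dotProduct_mulVec_nonneg ?_ ?_
  · unfold Matrix.IsHermitian
    ext i j
    simp [Matrix.conjTranspose_apply, vecMulVec_apply, mul_comm, Complex.conj_ofReal]
  · intro v
    rw [smul_mulVec, aux_vecMulVec_mulVec, dotProduct_smul, dotProduct_smul]
    have hconj : star v ⬝ᵥ y = star (star y ⬝ᵥ v) := by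
      simp [dotProduct, Finset.sum_congr, mul_comm]
    rw [hconj]
    set s : ℂ := star y ⬝ᵥ v
    have hss : (t : ℂ) • s • star s = ((t * Complex.normSq s : ℝ) : ℂ) := by
      simp only [smul_eq_mul, Complex.ofReal_mul]
      congr 1
      exact Complex.mul_conj s
    rw [hss]
    rw [Complex.nonneg_iff]
    constructor
    · simpa using mul_nonneg ht (Complex.normSq_nonneg s)
    · simp

lemma aux_rankOne_clm_apply (t : ℝ) (y v : EuclideanSpace ℂ (Fin n)) :
    (Matrix.toEuclideanCLM (𝕜 := ℂ) ((t : ℂ) • vecMulVec (y : Fin n → ℂ) (star (y : Fin n → ℂ)))) v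
      = ((t : ℂ) * (inner ℂ y v : ℂ)) • y := by
  rw [aux_clm_apply, smul_mulVec, aux_vecMulVec_mulVec, smul_smul]
  rw [aux_inner]; rfl

lemma aux_rankOne_norm (t : ℝ) (y : EuclideanSpace ℂ (Fin n)) :
    specNorm ((t : ℂ) • vecMulVec (y : Fin n → ℂ) (star (y : Fin n → ℂ))) = |t| * ‖y‖ ^ 2 := by
  set T := Matrix.toEuclideanCLM (𝕜 := ℂ)
    ((t : ℂ) • vecMulVec (y : Fin n → ℂ) (star (y : Fin n → ℂ)))
  have hT : ∀ v, T v = ((t : ℂ) * (inner ℂ y v : ℂ)) • y := aux_rankOne_clm_apply t y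
  have hub : ‖T‖ ≤ |t| * ‖y‖ ^ 2 := by
    apply ContinuousLinearMap.opNorm_le_bound
    · positivity
    · intro v
      rw [hT v, norm_smul]
      have h1 : ‖(t : ℂ) * (inner ℂ y v : ℂ)‖ ≤ |t| * (‖y‖ * ‖v‖) := by
        rw [norm_mul, Complex.norm_real, Real.norm_eq_abs]
        exact mul_le_mul_of_nonneg_left (norm_inner_le_norm y v) (abs_nonneg t)
      calc ‖(t : ℂ) * (inner ℂ y v : ℂ)‖ * ‖y‖ ≤ (|t| * (‖y‖ * ‖v‖)) * ‖y‖ :=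
            mul_le_mul_of_nonneg_right h1 (norm_nonneg y)
        _ = |t| * ‖y‖ ^ 2 * ‖v‖ := by ring
  have hlb : |t| * ‖y‖ ^ 2 ≤ ‖T‖ := by
    rcases eq_or_ne y 0 with hy | hy
    · have h0 : ‖y‖ = 0 := by rw [hy, norm_zero]
      have hz : |t| * (0:ℝ) ^ 2 = 0 := by ring
      rw [h0, hz]
      exact norm_nonneg T
    · have hy' : 0 < ‖y‖ := norm_pos_iff.mpr hy
      have h1 : ‖T y‖ = |t| * ‖y‖ ^ 2 * ‖y‖ := by
        rw [hT y, inner_self_eq_norm_sq_to_K (𝕜 := ℂ)]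
        simp only [norm_smul, norm_mul, norm_pow, Complex.norm_real, RCLike.norm_ofReal,
          Real.norm_eq_abs, abs_norm]
      have h2 := T.le_opNorm y
      rw [h1] at h2
      have := (mul_le_mul_iff_of_pos_right hy').mp h2
      linarith
  exact le_antisymm hub hlb

lemma aux_forward (x y : EuclideanSpace ℂ (Fin n)) (hy : y ≠ 0)
    (D : Matrix (Fin n) (Fin n) ℂ) (hD : (-D).PosSemidef) (hDx : D.mulVec x = y) :
    (inner ℂ x y : ℂ).im = 0 ∧ (inner ℂ x y : ℂ).re < 0 := by
  have h1 : (0 : ℂ) ≤ star (x : Fin n → ℂ) ⬝ᵥ ((-D) *ᵥ (x : Fin n → ℂ)) := hD.dotProduct_mulVec_nonneg (x : Fin n → ℂ)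
  have h2 : (-D) *ᵥ (x : Fin n → ℂ) = -(y : Fin n → ℂ) := by
    rw [neg_mulVec, hDx]
  have h3 : star (x : Fin n → ℂ) ⬝ᵥ ((-D) *ᵥ (x : Fin n → ℂ)) = -(inner ℂ x y : ℂ) := by
    rw [h2, dotProduct_neg]
    rw [aux_inner]; rfl
  rw [h3, Complex.nonneg_iff] at h1
  have him : (inner ℂ x y : ℂ).im = 0 := by
    have := h1.2
    simp only [Complex.neg_im] at this
    linarith
  refine ⟨him, ?_⟩
  have hle : (inner ℂ x y : ℂ).re ≤ 0 := by
    have := h1.1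
    simp only [Complex.neg_re] at this
    linarith
  rcases lt_or_eq_of_le hle with h | h
  · exact h
  · exfalso
    have hc : (inner ℂ x y : ℂ) = 0 := by
      refine Complex.ext_iff.mpr ⟨?_, ?_⟩ <;> simp only [Complex.zero_re, Complex.zero_im]
      · exact h
      · exact him
    have h0 : star (x : Fin n → ℂ) ⬝ᵥ ((-D) *ᵥ (x : Fin n → ℂ)) = 0 := by
      rw [h3, hc, neg_zero]
    have h4 := (hD.dotProduct_mulVec_zero_iff (x : Fin n → ℂ)).mp h0
    rw [h2, neg_eq_zero] at h4
    exact hy (WithLp.ofLp_injective 2 (by exact h4))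

lemma aux_tilde (x y : EuclideanSpace ℂ (Fin n))
    (h : (inner ℂ x y : ℂ).im = 0 ∧ (inner ℂ x y : ℂ).re < 0) :
    (-((inner ℂ x y : ℂ)⁻¹ • Matrix.vecMulVec y (star (y : Fin n → ℂ)))).PosSemidef ∧
      ((inner ℂ x y : ℂ)⁻¹ • Matrix.vecMulVec y (star (y : Fin n → ℂ))).mulVec x = y ∧
      specNorm ((inner ℂ x y : ℂ)⁻¹ • Matrix.vecMulVec y (star (y : Fin n → ℂ))) =
        ‖y‖ ^ 2 / ‖(inner ℂ x y : ℂ)‖ := by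
  set c : ℂ := (inner ℂ x y : ℂ) with hcdef
  set r : ℝ := c.re with hrdef
  have hr : c = ((r : ℝ) : ℂ) := Complex.ext (by rw [Complex.ofReal_re]) (by simp [h.1])
  have hre : r < 0 := h.2
  have hc0 : c ≠ 0 := by
    intro hc
    rw [hrdef, hc] at hre
    simp at hre
  have hinv : c⁻¹ = ((r⁻¹ : ℝ) : ℂ) := by
    rw [hr, ← Complex.ofReal_inv]
  have htpos : (0 : ℝ) ≤ -r⁻¹ := le_of_lt (neg_pos.mpr (inv_lt_zero.mpr hre))
  refine ⟨?_, ?_, ?_⟩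
  · have heq : -(c⁻¹ • Matrix.vecMulVec (y : Fin n → ℂ) (star (y : Fin n → ℂ)))
        = ((-r⁻¹ : ℝ) : ℂ) • Matrix.vecMulVec (y : Fin n → ℂ) (star (y : Fin n → ℂ)) := by
      rw [← neg_smul, hinv]
      norm_cast
    rw [heq]
    exact aux_rankOne_psd _ htpos _
  · rw [smul_mulVec, aux_vecMulVec_mulVec]
    have hyx : star (y : Fin n → ℂ) ⬝ᵥ (x : Fin n → ℂ) = c :=
      calc star (y : Fin n → ℂ) ⬝ᵥ (x : Fin n → ℂ) = (inner ℂ y x : ℂ) := (aux_inner y x).symm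
        _ = starRingEnd ℂ (inner ℂ x y : ℂ) := (inner_conj_symm y x).symm
        _ = starRingEnd ℂ c := by rw [← hcdef]
        _ = c := by rw [hr, Complex.conj_ofReal]
    rw [hyx, smul_smul, inv_mul_cancel₀ hc0, one_smul]
  · rw [hinv, aux_rankOne_norm r⁻¹ y, hr, Complex.norm_real, Real.norm_eq_abs, abs_inv, div_eq_mul_inv]
    ring

lemma aux_lower (x y : EuclideanSpace ℂ (Fin n))
    (hy : y ≠ 0)
    (h : (inner ℂ x y : ℂ).im = 0 ∧ (inner ℂ x y : ℂ).re < 0)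
    (D : Matrix (Fin n) (Fin n) ℂ) (hD : (-D).PosSemidef) (hDx : D.mulVec x = y) :
    ‖y‖ ^ 2 / ‖(inner ℂ x y : ℂ)‖ ≤ specNorm D := by
  set c : ℂ := (inner ℂ x y : ℂ) with hcdef
  obtain ⟨B, hB⟩ : ∃ B : Matrix (Fin n) (Fin n) ℂ, -D = Bᴴ * B := by
    open scoped MatrixOrder in
    obtain ⟨X, hX, -, hXX⟩ := CFC.exists_sqrt_of_isSelfAdjoint_of_quasispectrumRestricts
      hD.isHermitian (QuasispectrumRestricts.nnreal_of_nonneg hD.nonneg)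
    exact ⟨X, by rw [← hXX]; nth_rewrite 1 [← hX.star_eq]; rfl⟩
  set u : EuclideanSpace ℂ (Fin n) := (WithLp.equiv 2 _).symm (B *ᵥ (x : Fin n → ℂ)) with hu
  set v : EuclideanSpace ℂ (Fin n) := (WithLp.equiv 2 _).symm (B *ᵥ (y : Fin n → ℂ)) with hv
  have hMx : (-D) *ᵥ (x : Fin n → ℂ) = -(y : Fin n → ℂ) := by rw [neg_mulVec, hDx]
  have key : ∀ w : EuclideanSpace ℂ (Fin n),
      (inner ℂ ((WithLp.equiv 2 _).symm (B *ᵥ (w : Fin n → ℂ))) u : ℂ)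
        = star (w : Fin n → ℂ) ⬝ᵥ ((-D) *ᵥ (x : Fin n → ℂ)) := by
    intro w
    rw [aux_inner, hu]
    simp only [Equiv.apply_symm_apply]
    rw [star_mulVec, ← dotProduct_mulVec, mulVec_mulVec, ← hB]
  have hvu : (inner ℂ v u : ℂ) = -((‖y‖ : ℂ) ^ 2) := by
    rw [hv, key y, hMx, dotProduct_neg]
    have : star (y : Fin n → ℂ) ⬝ᵥ (y : Fin n → ℂ) = (inner ℂ y y : ℂ) := (aux_inner y y).symm
    rw [this, inner_self_eq_norm_sq_to_K]
    rfl
  have huu : (inner ℂ u u : ℂ) = -c := by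
    rw [hu, key x, hMx, dotProduct_neg]
    rw [hcdef, aux_inner]; rfl
  have hvv : (inner ℂ v v : ℂ) = star (y : Fin n → ℂ) ⬝ᵥ ((-D) *ᵥ (y : Fin n → ℂ)) := by
    rw [aux_inner, hv]
    simp only [Equiv.apply_symm_apply]
    rw [star_mulVec, ← dotProduct_mulVec, mulVec_mulVec, ← hB]
  -- norms
  have hcabs : ‖c‖ = -c.re := by
    have hr : c = ((c.re : ℝ) : ℂ) := Complex.ext (by simp) (by simp [h.1])
    rw [hr, Complex.norm_real, Real.norm_eq_abs, abs_of_neg h.2]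
    simp
  have hcpos : 0 < ‖c‖ := by
    rw [hcabs]; linarith [h.2]
  have hunorm : ‖u‖ ^ 2 = ‖c‖ := by
    have h1 : RCLike.re (inner ℂ u u : ℂ) = ‖u‖ ^ 2 := inner_self_eq_norm_sq u
    rw [huu, RCLike.re_to_complex, Complex.neg_re] at h1
    rw [← h1, hcabs]
  have hTnorm : ‖Matrix.toEuclideanCLM (𝕜 := ℂ) (-D)‖ = specNorm D := by
    rw [map_neg, norm_neg]
    rfl
  have hvnorm : ‖v‖ ^ 2 ≤ specNorm D * ‖y‖ ^ 2 := by
    have h1 : (inner ℂ v v : ℂ) = (inner ℂ y ((Matrix.toEuclideanCLM (𝕜 := ℂ) (-D)) y) : ℂ) := by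
      rw [hvv, aux_clm_apply, aux_inner]
      simp only [Equiv.apply_symm_apply]
      rfl
    have h3 : ‖v‖ ^ 2 ≤ ‖(inner ℂ y ((Matrix.toEuclideanCLM (𝕜 := ℂ) (-D)) y) : ℂ)‖ := by
      have h2 : RCLike.re (inner ℂ v v : ℂ) = ‖v‖ ^ 2 := inner_self_eq_norm_sq v
      have h4 : (‖v‖ ^ 2 : ℝ) = ((inner ℂ y ((Matrix.toEuclideanCLM (𝕜 := ℂ) (-D)) y) : ℂ)).re := by
        rw [← h2, h1, RCLike.re_to_complex]
      rw [h4]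
      exact Complex.re_le_norm _
    calc ‖v‖ ^ 2 ≤ ‖(inner ℂ y ((Matrix.toEuclideanCLM (𝕜 := ℂ) (-D)) y) : ℂ)‖ := h3
      _ ≤ ‖y‖ * ‖(Matrix.toEuclideanCLM (𝕜 := ℂ) (-D)) y‖ := norm_inner_le_norm _ _
      _ ≤ ‖y‖ * (‖Matrix.toEuclideanCLM (𝕜 := ℂ) (-D)‖ * ‖y‖) := by
          exact mul_le_mul_of_nonneg_left
            ((Matrix.toEuclideanCLM (𝕜 := ℂ) (-D)).le_opNorm y) (norm_nonneg y)
      _ = specNorm D * ‖y‖ ^ 2 := by rw [hTnorm]; ring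
  have hCS : ‖y‖ ^ 2 ≤ ‖v‖ * ‖u‖ := by
    have h1 : ‖(inner ℂ v u : ℂ)‖ = ‖y‖ ^ 2 := by
      rw [hvu]
      simp [norm_neg]
    calc ‖y‖ ^ 2 = ‖(inner ℂ v u : ℂ)‖ := h1.symm
      _ ≤ ‖v‖ * ‖u‖ := norm_inner_le_norm v u
  have hy2 : (0 : ℝ) < ‖y‖ ^ 2 := by
    have : 0 < ‖y‖ := norm_pos_iff.mpr hy
    positivity
  have hfin : ‖y‖ ^ 2 * ‖y‖ ^ 2 ≤ specNorm D * ‖y‖ ^ 2 * ‖c‖ := by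
    have h1 : (‖y‖ ^ 2) ^ 2 ≤ (‖v‖ * ‖u‖) ^ 2 :=
      pow_le_pow_left₀ (by positivity) hCS 2
    have h2 : (‖v‖ * ‖u‖) ^ 2 = ‖v‖ ^ 2 * ‖u‖ ^ 2 := by ring
    nlinarith [norm_nonneg v, norm_nonneg u, hvnorm, hunorm]
  rw [div_le_iff₀ hcpos]
  have := (mul_le_mul_iff_of_pos_right hy2).mp (by linarith [hfin] : ‖y‖ ^ 2 * ‖y‖ ^ 2 ≤ (specNorm D * ‖c‖) * ‖y‖ ^ 2)
  linarith

end Aux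

/-- Negative semidefinite mapping lemma: for nonzero `x, y` there is a Hermitian
negative semidefinite `Δ` with `Δx = y` iff `xᴴy` is a negative real number; in
that case the minimal spectral norm is `‖y‖²/|xᴴy|`, attained by the rank-one
matrix `Δ̃ = (1/(xᴴy)) y yᴴ`. -/
theorem negSemidef_mapping {n : ℕ} (x y : EuclideanSpace ℂ (Fin n))
    (hx : x ≠ 0) (hy : y ≠ 0) :
    ((∃ D : Matrix (Fin n) (Fin n) ℂ, (-D).PosSemidef ∧ D.mulVec x = y) ↔
      ((inner ℂ x y : ℂ).im = 0 ∧ (inner ℂ x y : ℂ).re < 0)) ∧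
    (((inner ℂ x y : ℂ).im = 0 ∧ (inner ℂ x y : ℂ).re < 0) →
      (IsLeast {r : ℝ | ∃ D : Matrix (Fin n) (Fin n) ℂ,
          (-D).PosSemidef ∧ D.mulVec x = y ∧ r = specNorm D}
        (‖y‖ ^ 2 / ‖(inner ℂ x y : ℂ)‖) ∧
      ((-((inner ℂ x y : ℂ)⁻¹ • Matrix.vecMulVec y (star (y : Fin n → ℂ)))).PosSemidef ∧
        ((inner ℂ x y : ℂ)⁻¹ • Matrix.vecMulVec y (star (y : Fin n → ℂ))).mulVec x = y ∧
        specNorm ((inner ℂ x y : ℂ)⁻¹ • Matrix.vecMulVec y (star (y : Fin n → ℂ))) =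
          ‖y‖ ^ 2 / ‖(inner ℂ x y : ℂ)‖))) := by
  constructor
  · constructor
    · rintro ⟨D, hD, hDx⟩
      exact aux_forward x y hy D hD hDx
    · intro h
      obtain ⟨hpsd, hmul, -⟩ := aux_tilde x y h
      exact ⟨_, hpsd, hmul⟩
  · intro h
    obtain ⟨hpsd, hmul, hnorm⟩ := aux_tilde x y h
    refine ⟨⟨⟨_, hpsd, hmul, hnorm.symm⟩, ?_⟩, hpsd, hmul, hnorm⟩
    rintro r ⟨D, hD, hDx, rfl⟩
    exact aux_lower x y hy h D hD hDx
end

section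
/- Let J, R, E ∈ ℂ^{n×n} with J skew-Hermitian (Jᴴ = −J), R Hermitian positive semidefinite, and E Hermitian positive semidefinite. Then ker(E) ∩ ker(J − R) = ker(E) ∩ ker(R) ∩ ker(J). -/
open Matrix
open scoped ComplexOrder

/-- For a DH pencil `sE + (J − R)` one has
`ker(E) ∩ ker(J − R) = ker(E) ∩ ker(R) ∩ ker(J)`. -/
theorem DH_common_kernel {n : ℕ} (J R E : Matrix (Fin n) (Fin n) ℂ)
    (hJ : Jᴴ = -J) (hR : R.PosSemidef) (hE : E.PosSemidef) :
    ∀ v : Fin n → ℂ,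
      (E.mulVec v = 0 ∧ (J - R).mulVec v = 0) ↔
      (E.mulVec v = 0 ∧ R.mulVec v = 0 ∧ J.mulVec v = 0) := by
  intro v
  constructor
  · rintro ⟨hEv, hJR⟩
    have hsub : J.mulVec v = R.mulVec v := by
      have := sub_eq_zero.mp (by rwa [sub_mulVec] at hJR)
      exact this
    set a : ℂ := star v ⬝ᵥ R.mulVec v with ha
    set b : ℂ := star v ⬝ᵥ J.mulVec v with hb
    have hab : b = a := by rw [ha, hb, hsub]
    have hstar : ∀ (M : Matrix (Fin n) (Fin n) ℂ),
        star (star v ⬝ᵥ M.mulVec v) = star v ⬝ᵥ Mᴴ.mulVec v := by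
      intro M
      rw [star_dotProduct, star_star, star_mulVec, dotProduct_mulVec,
        ← dotProduct_mulVec]
    have hsa : star a = a := by rw [ha, hstar, hR.isHermitian.eq]
    have hsb : star b = -b := by
      rw [hb, hstar, hJ, neg_mulVec, dotProduct_neg]
    have ha0 : a = 0 := by
      have h2 : a = -a := by
        calc a = star a := hsa.symm
        _ = star b := by rw [hab]
        _ = -b := hsb
        _ = -a := by rw [hab]
      linear_combination h2 / 2
    have hRv : R.mulVec v = 0 := (hR.dotProduct_mulVec_zero_iff v).mp ha0
    exact ⟨hEv, hRv, by rw [hsub, hRv]⟩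
  · rintro ⟨hEv, hRv, hJv⟩
    exact ⟨hEv, by rw [sub_mulVec, hRv, hJv, sub_zero]⟩
end

section
/- Let J, R, E ∈ ℝ^{n×n} with J skew-symmetric (Jᵀ = −J), R symmetric positive semidefinite, and E symmetric positive semidefinite, and consider the real DH pencil L(s) = sE + (J − R). Then L(s) is singular (i.e., det(λE + (J − R)) = 0 for every λ ∈ ℝ) if and only if ker(E) ∩ ker(R) ∩ ker(J) ≠ {0}. -/
open Matrix

/-- A real DH pencil `sE + (J − R)` is singular iff `J`, `R`, `E` have a common
nonzero null vector. -/
theorem real_DH_pencil_singular_iff {n : ℕ} (J R E : Matrix (Fin n) (Fin n) ℝ)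
    (hJ : Jᵀ = -J) (hR : R.PosSemidef) (hE : E.PosSemidef) :
    (∀ l : ℝ, (l • E + (J - R)).det = 0) ↔
      ∃ v : Fin n → ℝ, v ≠ 0 ∧ E.mulVec v = 0 ∧ R.mulVec v = 0 ∧ J.mulVec v = 0 := by
  constructor
  · intro h
    obtain ⟨w, hw, hmul⟩ := (Matrix.exists_mulVec_eq_zero_iff).mpr (h (-1))
    -- w ⬝ᵥ J *ᵥ w = 0
    have hskew : w ⬝ᵥ J *ᵥ w = 0 := by
      have h1 : w ⬝ᵥ J *ᵥ w = Jᵀ *ᵥ w ⬝ᵥ w := by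
        rw [Matrix.dotProduct_mulVec, ← Matrix.mulVec_transpose]
      rw [hJ] at h1
      simp only [Matrix.neg_mulVec, neg_dotProduct, dotProduct_neg, dotProduct_comm] at h1
      linarith
    have hdot : w ⬝ᵥ ((-1 : ℝ) • E + (J - R)) *ᵥ w = 0 := by rw [hmul, dotProduct_zero]
    have hexp : w ⬝ᵥ ((-1 : ℝ) • E + (J - R)) *ᵥ w
        = -(w ⬝ᵥ E *ᵥ w) + (w ⬝ᵥ J *ᵥ w - w ⬝ᵥ R *ᵥ w) := by
      simp [Matrix.add_mulVec, Matrix.sub_mulVec, Matrix.smul_mulVec,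
        dotProduct_add, dotProduct_sub, dotProduct_smul, Matrix.neg_mulVec, dotProduct_neg]
    have hEnn : 0 ≤ w ⬝ᵥ E *ᵥ w := by simpa using hE.dotProduct_mulVec_nonneg w
    have hRnn : 0 ≤ w ⬝ᵥ R *ᵥ w := by simpa using hR.dotProduct_mulVec_nonneg w
    have hEz : w ⬝ᵥ E *ᵥ w = 0 := by rw [hexp, hskew] at hdot; linarith
    have hRz : w ⬝ᵥ R *ᵥ w = 0 := by rw [hexp, hskew] at hdot; linarith
    have hEw : E *ᵥ w = 0 := by
      have := hE.dotProduct_mulVec_zero_iff w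
      simpa [hEz] using this.mp (by simpa using hEz)
    have hRw : R *ᵥ w = 0 := by
      have := hR.dotProduct_mulVec_zero_iff w
      simpa [hRz] using this.mp (by simpa using hRz)
    have hJw : J *ᵥ w = 0 := by
      have := hmul
      rwa [Matrix.add_mulVec, Matrix.sub_mulVec, Matrix.smul_mulVec, hEw, hRw,
        smul_zero, zero_add, sub_zero] at this
    exact ⟨w, hw, hEw, hRw, hJw⟩
  · rintro ⟨v, hv, hEv, hRv, hJv⟩ l
    apply Matrix.exists_mulVec_eq_zero_iff.mp
    refine ⟨v, hv, ?_⟩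
    rw [Matrix.add_mulVec, Matrix.sub_mulVec, Matrix.smul_mulVec, hEv, hRv, hJv]
    simp
end

section
/- Let sE + (J − R) be a regular DH pencil, where J, R, E ∈ ℂ^{n×n} with Jᴴ = −J, R ⪰ 0, E ⪰ 0. Then δ₀ᵈ(J,R,E)² = min{ δ₀ᵈ(J,R)², δ₀ᵈ(J,E)², inf_{α ∈ ℳ₃} [ (αᴴJᴴJα)/(αᴴα) + ((αᴴR²α)/(αᴴRα))² + ((αᴴE²α)/(αᴴEα))² ] }, where ℳ₃ = {α ∈ ℂⁿ : Rα ≠ 0 and Eα ≠ 0}. -/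
open Matrix
open scoped ComplexOrder ENNReal

/-- The structured distance `δ₀ᵈ(J,R,E)` (valued in `ℝ≥0∞`; `⊤` if no admissible
perturbation exists): skew-Hermitian perturbations to `J`, negative semidefinite
structure-preserving perturbations to `R` and `E`, making a common null vector. -/
noncomputable def deltaJRE {n : ℕ} (J R E : Matrix (Fin n) (Fin n) ℂ) : ℝ≥0∞ :=
  sInf {r : ℝ≥0∞ | ∃ DJ DR DE : Matrix (Fin n) (Fin n) ℂ,
    DJᴴ = -DJ ∧ (-DR).PosSemidef ∧ (-DE).PosSemidef ∧
    (R + DR).PosSemidef ∧ (E + DE).PosSemidef ∧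
    (∃ x : Fin n → ℂ, x ≠ 0 ∧ (J + DJ).mulVec x = 0 ∧
      (R + DR).mulVec x = 0 ∧ (E + DE).mulVec x = 0) ∧
    r = ENNReal.ofReal
      (Real.sqrt (specNorm DJ ^ 2 + specNorm DR ^ 2 + specNorm DE ^ 2))}

/-- The structured distance `δ₀ᵈ(J,R)` with `E` unperturbed. -/
noncomputable def deltaJR {n : ℕ} (J R E : Matrix (Fin n) (Fin n) ℂ) : ℝ≥0∞ :=
  sInf {r : ℝ≥0∞ | ∃ DJ DR : Matrix (Fin n) (Fin n) ℂ,
    DJᴴ = -DJ ∧ (-DR).PosSemidef ∧ (R + DR).PosSemidef ∧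
    (∃ x : Fin n → ℂ, x ≠ 0 ∧ E.mulVec x = 0 ∧ (R + DR).mulVec x = 0 ∧
      (J + DJ).mulVec x = 0) ∧
    r = ENNReal.ofReal (Real.sqrt (specNorm DJ ^ 2 + specNorm DR ^ 2))}

/-- The structured distance `δ₀ᵈ(J,E)` with `R` unperturbed. -/
noncomputable def deltaJE {n : ℕ} (J R E : Matrix (Fin n) (Fin n) ℂ) : ℝ≥0∞ :=
  sInf {r : ℝ≥0∞ | ∃ DJ DE : Matrix (Fin n) (Fin n) ℂ,
    DJᴴ = -DJ ∧ (-DE).PosSemidef ∧ (E + DE).PosSemidef ∧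
    (∃ x : Fin n → ℂ, x ≠ 0 ∧ (E + DE).mulVec x = 0 ∧ R.mulVec x = 0 ∧
      (J + DJ).mulVec x = 0) ∧
    r = ENNReal.ofReal (Real.sqrt (specNorm DJ ^ 2 + specNorm DE ^ 2))}


set_option synthInstance.maxHeartbeats 1000000
set_option maxHeartbeats 2000000

namespace DHAux

variable {n : ℕ}

open scoped MatrixOrder in
theorem _root_.Matrix.PosSemidef.exists_sqrt_aux {S : Matrix (Fin n) (Fin n) ℂ}
    (hS : S.PosSemidef) : ∃ B : Matrix (Fin n) (Fin n) ℂ, B.PosSemidef ∧ B * B = S :=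
  ⟨CFC.sqrt S, (CFC.sqrt_nonneg S).posSemidef, CFC.sqrt_mul_sqrt_self S hS.nonneg⟩

noncomputable def _root_.Matrix.PosSemidef.sqrt {S : Matrix (Fin n) (Fin n) ℂ}
    (hS : S.PosSemidef) : Matrix (Fin n) (Fin n) ℂ :=
  Classical.choose hS.exists_sqrt_aux

theorem _root_.Matrix.PosSemidef.posSemidef_sqrt {S : Matrix (Fin n) (Fin n) ℂ}
    (hS : S.PosSemidef) : hS.sqrt.PosSemidef :=
  (Classical.choose_spec hS.exists_sqrt_aux).1

theorem _root_.Matrix.PosSemidef.sqrt_mul_self {S : Matrix (Fin n) (Fin n) ℂ}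
    (hS : S.PosSemidef) : hS.sqrt * hS.sqrt = S :=
  (Classical.choose_spec hS.exists_sqrt_aux).2

noncomputable abbrev ee (x : Fin n → ℂ) : EuclideanSpace ℂ (Fin n) := (WithLp.equiv 2 _).symm x

lemma ee_mulVec (X : Matrix (Fin n) (Fin n) ℂ) (x : Fin n → ℂ) :
    ee (X.mulVec x) = toEuclideanCLM (𝕜 := ℂ) X (ee x) := by
  simp [ee, Matrix.toEuclideanCLM_toLp]

lemma inner_ee (x y : Fin n → ℂ) : inner ℂ (ee x) (ee y) = star x ⬝ᵥ y := by
  simp [ee, EuclideanSpace.inner_eq_star_dotProduct, dotProduct, Matrix.star_apply ,mul_comm]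

lemma norm_ee_sq (x : Fin n → ℂ) : ‖ee x‖ ^ 2 = (star x ⬝ᵥ x).re := by
  rw [← inner_ee x x]
  rw [← inner_self_eq_norm_sq (𝕜 := ℂ)]
  rfl

lemma mulVec_norm_le (X : Matrix (Fin n) (Fin n) ℂ) (x : Fin n → ℂ) :
    ‖ee (X.mulVec x)‖ ≤ specNorm X * ‖ee x‖ := by
  rw [ee_mulVec]; exact (toEuclideanCLM (𝕜 := ℂ) X).le_opNorm _

lemma ee_eq_zero {x : Fin n → ℂ} : ee x = 0 ↔ x = 0 := by
  constructor
  · intro h; simpa [ee] using congrArg (WithLp.equiv 2 _) h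
  · rintro rfl; simp [ee]

lemma specNorm_nonneg (X : Matrix (Fin n) (Fin n) ℂ) : 0 ≤ specNorm X := norm_nonneg _
lemma specNorm_zero : specNorm (0 : Matrix (Fin n) (Fin n) ℂ) = 0 := by rw [specNorm, map_zero, norm_zero]
lemma specNorm_neg (X : Matrix (Fin n) (Fin n) ℂ) : specNorm (-X) = specNorm X := by
  rw [specNorm, map_neg, norm_neg]; rfl
lemma specNorm_smul (c : ℂ) (X : Matrix (Fin n) (Fin n) ℂ) :
    specNorm (c • X) = ‖c‖ * specNorm X := by
  rw [specNorm, _root_.map_smul]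
  rw [norm_smul c (toEuclideanCLM (𝕜 := ℂ) X)]; rfl
lemma specNorm_mul_le (X Y : Matrix (Fin n) (Fin n) ℂ) :
    specNorm (X * Y) ≤ specNorm X * specNorm Y := by
  simp only [specNorm, MulHomClass.map_mul]; exact norm_mul_le _ _
lemma specNorm_conjTranspose_mul_self (X : Matrix (Fin n) (Fin n) ℂ) :
    specNorm (Xᴴ * X) = specNorm X ^ 2 := by
  simp only [specNorm, MulHomClass.map_mul, pow_two]
  rw [show toEuclideanCLM (𝕜 := ℂ) Xᴴ = star (toEuclideanCLM (𝕜 := ℂ) X) from map_star _ _]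
  exact CStarRing.norm_star_mul_self (x := toEuclideanCLM (𝕜 := ℂ) X)

lemma dot_conj_mul (A : Matrix (Fin n) (Fin n) ℂ) (x : Fin n → ℂ) :
    star x ⬝ᵥ (Aᴴ * A).mulVec x = star (A.mulVec x) ⬝ᵥ (A.mulVec x) := by
  rw [← mulVec_mulVec, dotProduct_mulVec, ← star_mulVec]

lemma norm_mulVec_sq (A : Matrix (Fin n) (Fin n) ℂ) (x : Fin n → ℂ) :
    ‖ee (A.mulVec x)‖ ^ 2 = (star x ⬝ᵥ (Aᴴ * A).mulVec x).re := by
  rw [dot_conj_mul, norm_ee_sq]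

lemma quad_re_eq (S : Matrix (Fin n) (Fin n) ℂ) (hS : S.IsHermitian) (x : Fin n → ℂ) :
    star x ⬝ᵥ S.mulVec x = ((star x ⬝ᵥ S.mulVec x).re : ℂ) := by
  have hconj : (starRingEnd ℂ) (star x ⬝ᵥ S.mulVec x) = star x ⬝ᵥ S.mulVec x := by
    have : star (star x ⬝ᵥ S.mulVec x) = star (S.mulVec x) ⬝ᵥ x := by
      rw [star_dotProduct, star_star]
    rw [show (starRingEnd ℂ) (star x ⬝ᵥ S.mulVec x) = star (star x ⬝ᵥ S.mulVec x) from rfl,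
      this, star_mulVec, hS.eq, ← dotProduct_mulVec]
  exact (Complex.conj_eq_iff_re.mp hconj).symm

lemma psd_key {S : Matrix (Fin n) (Fin n) ℂ} (hS : S.PosSemidef) (x : Fin n → ℂ) :
    ‖ee (S.mulVec x)‖ ^ 2 ≤ specNorm S * (star x ⬝ᵥ S.mulVec x).re := by
  have hB := hS.posSemidef_sqrt
  have hBH : hS.sqrt.IsHermitian := hB.isHermitian
  have hmul : hS.sqrt * hS.sqrt = S := hS.sqrt_mul_self
  have h1 : S.mulVec x = hS.sqrt.mulVec (hS.sqrt.mulVec x) := by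
    rw [mulVec_mulVec, hmul]
  have h2 : ‖ee (hS.sqrt.mulVec x)‖ ^ 2 = (star x ⬝ᵥ S.mulVec x).re := by
    rw [norm_mulVec_sq, hBH.eq, hmul]
  have h3 : specNorm hS.sqrt ^ 2 = specNorm S := by
    rw [← specNorm_conjTranspose_mul_self, hBH.eq, hmul]
  calc ‖ee (S.mulVec x)‖ ^ 2 ≤ (specNorm hS.sqrt * ‖ee (hS.sqrt.mulVec x)‖) ^ 2 := by
        rw [h1]; exact pow_le_pow_left₀ (norm_nonneg _) (mulVec_norm_le _ _) 2
    _ = specNorm S * (star x ⬝ᵥ S.mulVec x).re := by rw [mul_pow, h2, h3]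

lemma psd_quad_pos {S : Matrix (Fin n) (Fin n) ℂ} (hS : S.PosSemidef) {x : Fin n → ℂ}
    (hx : S.mulVec x ≠ 0) : 0 < (star x ⬝ᵥ S.mulVec x).re := by
  have h0 := hS.re_dotProduct_nonneg x
  rw [RCLike.re_to_complex] at h0
  rcases lt_or_eq_of_le h0 with h | h
  · exact h
  · exfalso
    apply hx
    rw [← hS.dotProduct_mulVec_zero_iff x]
    rw [quad_re_eq S hS.isHermitian x, ← h, Complex.ofReal_zero]

lemma outer_ct (v w : Fin n → ℂ) : (vecMulVec v (star w))ᴴ = vecMulVec w (star v) := by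
  ext i j
  simp [conjTranspose_apply, vecMulVec_apply, mul_comm]

lemma outer_mulVec (v w y : Fin n → ℂ) :
    (vecMulVec v w).mulVec y = (w ⬝ᵥ y) • v := by
  ext i
  simp only [mulVec, dotProduct, vecMulVec_apply, Pi.smul_apply, smul_eq_mul,
    Finset.sum_mul]
  exact Finset.sum_congr rfl fun j _ => by ring

lemma outer_mul (v w a b : Fin n → ℂ) :
    vecMulVec v w * vecMulVec a b = (w ⬝ᵥ a) • vecMulVec v b := by
  ext i j
  simp only [mul_apply, vecMulVec_apply, Matrix.smul_apply, smul_eq_mul, dotProduct,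
    Finset.sum_mul]
  exact Finset.sum_congr rfl fun k _ => by ring
lemma specNorm_eq_zero {X : Matrix (Fin n) (Fin n) ℂ} (h : specNorm X = 0) : X = 0 := by
  have h2 : Matrix.toEuclideanCLM (𝕜 := ℂ) X = 0 := by
    rwa [specNorm, norm_eq_zero] at h
  have := congrArg (Matrix.toEuclideanCLM (𝕜 := ℂ)).symm h2
  simpa using this

lemma star_dot_self (v : Fin n → ℂ) : star (star v ⬝ᵥ v) = star v ⬝ᵥ v := by
  conv_lhs => rw [star_dotProduct, star_star]

lemma dot_star_self_nonneg (z : ℂ) : 0 ≤ star z * z := by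
  rw [show star z = (starRingEnd ℂ) z from rfl, Complex.conj_mul']
  exact_mod_cast Complex.zero_le_real.mpr (by positivity)

lemma specNorm_outer_self (v : Fin n → ℂ) (hv : v ≠ 0) :
    specNorm (vecMulVec v (star v)) = ‖ee v‖ ^ 2 := by
  set N := vecMulVec v (star v) with hN
  have hherm : Nᴴ = N := outer_ct v v
  have hdot : star v ⬝ᵥ v = ((‖ee v‖ ^ 2 : ℝ) : ℂ) := by
    rw [norm_ee_sq]
    exact (Complex.conj_eq_iff_re.mp (star_dot_self v)).symm
  have hNN : N * N = ((‖ee v‖ ^ 2 : ℝ) : ℂ) • N := by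
    rw [hN, outer_mul, ← hdot]
  have hsq : specNorm N ^ 2 = ‖ee v‖ ^ 2 * specNorm N := by
    rw [← specNorm_conjTranspose_mul_self, hherm, hNN, specNorm_smul]
    simp
  have hne : specNorm N ≠ 0 := by
    intro h0
    have hN0 : N = 0 := specNorm_eq_zero h0
    have h1 : ((star v ⬝ᵥ v) • v : Fin n → ℂ) = 0 := by
      rw [← outer_mulVec v (star v) v, ← hN, hN0, zero_mulVec]
    rcases smul_eq_zero.mp h1 with h | h
    · exact hv (dotProduct_star_self_eq_zero.mp h)
    · exact hv h
  have := hsq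
  rw [pow_two] at this
  exact mul_right_cancel₀ hne this

lemma exists_DS {S : Matrix (Fin n) (Fin n) ℂ} (hS : S.PosSemidef) (α : Fin n → ℂ)
    (hα : S.mulVec α ≠ 0) :
    ∃ DS : Matrix (Fin n) (Fin n) ℂ, (-DS).PosSemidef ∧ (S + DS).PosSemidef ∧
      (S + DS).mulVec α = 0 ∧
      specNorm DS = (star α ⬝ᵥ (S * S).mulVec α).re / (star α ⬝ᵥ S.mulVec α).re := by
  classical
  set v := S.mulVec α with hv
  set c := (star α ⬝ᵥ v).re with hc
  have hcpos : 0 < c := psd_quad_pos hS hα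
  have hcv : star α ⬝ᵥ v = (c : ℂ) := quad_re_eq S hS.isHermitian α
  set N := vecMulVec v (star v) with hN
  have hNherm : Nᴴ = N := outer_ct v v
  refine ⟨-(((c⁻¹ : ℝ) : ℂ) • N), ?_, ?_, ?_, ?_⟩
  · -- (-DS).PosSemidef
    rw [neg_neg]
    refine Matrix.PosSemidef.of_dotProduct_mulVec_nonneg ?_ ?_
    · show (((c⁻¹ : ℝ) : ℂ) • N)ᴴ = _
      rw [conjTranspose_smul, hNherm, Complex.star_def, Complex.conj_ofReal]
    · intro x
      rw [smul_mulVec, hN, outer_mulVec, dotProduct_smul, dotProduct_smul]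
      have hz : star v ⬝ᵥ x = star (star x ⬝ᵥ v) := star_dotProduct v x
      rw [smul_eq_mul, smul_eq_mul, hz]
      exact mul_nonneg (Complex.zero_le_real.mpr (by positivity))
        (dot_star_self_nonneg _)
  · -- (S + DS).PosSemidef
    have hBfac : hS.sqrt * hS.sqrt = S := hS.sqrt_mul_self
    have hBh : hS.sqrt.IsHermitian := hS.posSemidef_sqrt.isHermitian
    set B := hS.sqrt with hB
    have hrep : ∀ x y : Fin n → ℂ, star x ⬝ᵥ S.mulVec y
        = (inner ℂ (ee (B.mulVec x)) (ee (B.mulVec y)) : ℂ) := by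
      intro x y
      rw [inner_ee, star_mulVec, ← dotProduct_mulVec, mulVec_mulVec, hBh.eq, hBfac]
    have hDSherm : (-(((c⁻¹ : ℝ) : ℂ) • N)).IsHermitian := by
      rw [IsHermitian, conjTranspose_neg, conjTranspose_smul, hNherm]
      simp [Complex.conj_ofReal]
    refine Matrix.PosSemidef.of_dotProduct_mulVec_nonneg (hS.isHermitian.add hDSherm) fun x => ?_
    set z := star x ⬝ᵥ v with hz
    have hzin : z = (inner ℂ (ee (B.mulVec x)) (ee (B.mulVec α)) : ℂ) := by
      rw [hz, hv, hrep]
    have hqx : star x ⬝ᵥ S.mulVec x = ((‖ee (B.mulVec x)‖ ^ 2 : ℝ) : ℂ) := by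
      rw [hrep x x]
      exact_mod_cast (inner_self_eq_norm_sq_to_K (𝕜 := ℂ) (ee (B.mulVec x)))
    have hcval : c = ‖ee (B.mulVec α)‖ ^ 2 := by
      have := hqx  -- dummy
      have h2 : star α ⬝ᵥ S.mulVec α = ((‖ee (B.mulVec α)‖ ^ 2 : ℝ) : ℂ) := by
        rw [hrep α α]
        exact_mod_cast (inner_self_eq_norm_sq_to_K (𝕜 := ℂ) (ee (B.mulVec α)))
      rw [hc, hv, h2, Complex.ofReal_re]
    have hDSx : star x ⬝ᵥ (-(((c⁻¹ : ℝ) : ℂ) • N)).mulVec x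
        = -(((c⁻¹ * ‖z‖ ^ 2 : ℝ) : ℂ)) := by
      rw [neg_mulVec, smul_mulVec, hN, outer_mulVec, dotProduct_neg,
        dotProduct_smul, dotProduct_smul]
      have h3 : star v ⬝ᵥ x = star z := by rw [hz]; exact star_dotProduct v x
      rw [smul_eq_mul, smul_eq_mul, h3, ← hz,
        show (star z : ℂ) = (starRingEnd ℂ) z from rfl, Complex.conj_mul']
      push_cast
      ring
    rw [add_mulVec, dotProduct_add, hDSx, hqx]
    have hzb : ‖z‖ ≤ ‖ee (B.mulVec x)‖ * ‖ee (B.mulVec α)‖ := by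
      rw [hzin]; exact norm_inner_le_norm _ _
    have hineq : c⁻¹ * ‖z‖ ^ 2 ≤ ‖ee (B.mulVec x)‖ ^ 2 := by
      have h4 : ‖z‖ ^ 2 ≤ ‖ee (B.mulVec x)‖ ^ 2 * c := by
        rw [hcval]
        calc ‖z‖ ^ 2 ≤ (‖ee (B.mulVec x)‖ * ‖ee (B.mulVec α)‖) ^ 2 :=
              pow_le_pow_left₀ (norm_nonneg _) hzb 2
          _ = ‖ee (B.mulVec x)‖ ^ 2 * ‖ee (B.mulVec α)‖ ^ 2 := by ring
      calc c⁻¹ * ‖z‖ ^ 2 ≤ c⁻¹ * (‖ee (B.mulVec x)‖ ^ 2 * c) := by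
            exact mul_le_mul_of_nonneg_left h4 (by positivity)
        _ = ‖ee (B.mulVec x)‖ ^ 2 := by field_simp
    have : ((‖ee (B.mulVec x)‖ ^ 2 : ℝ) : ℂ) + -(((c⁻¹ * ‖z‖ ^ 2 : ℝ) : ℂ))
        = (((‖ee (B.mulVec x)‖ ^ 2 - c⁻¹ * ‖z‖ ^ 2 : ℝ)) : ℂ) := by push_cast; ring
    rw [this]
    exact Complex.zero_le_real.mpr (by linarith)
  · -- kernel
    rw [add_mulVec, neg_mulVec, smul_mulVec, hN, outer_mulVec]
    have hvα : star v ⬝ᵥ α = (c : ℂ) := by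
      rw [star_dotProduct, hcv, Complex.star_def, Complex.conj_ofReal]
    rw [hvα, smul_smul]
    have h5 : ((c⁻¹ : ℝ) : ℂ) * (c : ℂ) = 1 := by
      push_cast
      rw [inv_mul_cancel₀ (by exact_mod_cast ne_of_gt hcpos)]
    rw [h5, one_smul, ← hv, add_neg_cancel]
  · -- norm
    rw [specNorm_neg, specNorm_smul, specNorm_outer_self v hα]
    have hnum : (star α ⬝ᵥ (S * S).mulVec α).re = ‖ee v‖ ^ 2 := by
      rw [show S * S = Sᴴ * S by rw [hS.isHermitian.eq], dot_conj_mul, ← hv, ← norm_ee_sq]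
    rw [hnum, Complex.norm_real, Real.norm_eq_abs, abs_of_nonneg (by positivity)]
    have hc0 : c ≠ 0 := ne_of_gt hcpos
    field_simp

lemma vecMulVec_zero_left (w : Fin n → ℂ) : vecMulVec (0 : Fin n → ℂ) w = 0 := by
  ext i j; simp [vecMulVec_apply]
lemma vecMulVec_zero_right (v : Fin n → ℂ) : vecMulVec v (0 : Fin n → ℂ) = 0 := by
  ext i j; simp [vecMulVec_apply]

lemma dot_self_pos {α : Fin n → ℂ} (hα : α ≠ 0) : 0 < (star α ⬝ᵥ α).re := by
  rw [← norm_ee_sq]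
  have h : ee α ≠ 0 := fun h => hα (ee_eq_zero.mp h)
  exact pow_pos (norm_pos_iff.mpr h) 2

lemma dot_self_real (α : Fin n → ℂ) : star α ⬝ᵥ α = (((star α ⬝ᵥ α).re : ℝ) : ℂ) :=
  (Complex.conj_eq_iff_re.mp (star_dot_self α)).symm

lemma exists_DJ (J : Matrix (Fin n) (Fin n) ℂ) (hJ : Jᴴ = -J) (α : Fin n → ℂ) (hα : α ≠ 0) :
    ∃ DJ : Matrix (Fin n) (Fin n) ℂ, DJᴴ = -DJ ∧ (J + DJ).mulVec α = 0 ∧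
      specNorm DJ ^ 2 = (star α ⬝ᵥ (Jᴴ * J).mulVec α).re / (star α ⬝ᵥ α).re := by
  classical
  obtain ⟨na, hna_def⟩ : ∃ x_ : ℂ, x_ = (star α ⬝ᵥ α) := ⟨_, rfl⟩
  obtain ⟨ca, hca_def⟩ : ∃ x_ : ℝ, x_ = (na.re) := ⟨_, rfl⟩
  have hca : 0 < ca := by rw [hca_def, hna_def]; exact dot_self_pos hα
  have hna : na = (ca : ℂ) := by rw [hca_def, hna_def]; exact dot_self_real α
  have hna0 : na ≠ 0 := by rw [hna]; exact_mod_cast ne_of_gt hca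
  have hca0 : ca ≠ 0 := ne_of_gt hca
  obtain ⟨v, hv_def⟩ : ∃ x_ : Fin n → ℂ, x_ = (-(J.mulVec α)) := ⟨_, rfl⟩
  obtain ⟨μ, hμ_def⟩ : ∃ x_ : ℂ, x_ = (na⁻¹ * (star α ⬝ᵥ v)) := ⟨_, rfl⟩
  obtain ⟨w, hw_def⟩ : ∃ x_ : Fin n → ℂ, x_ = (v - μ • α) := ⟨_, rfl⟩
  obtain ⟨nw, hnw_def⟩ : ∃ x_ : ℂ, x_ = (star w ⬝ᵥ w) := ⟨_, rfl⟩
  obtain ⟨cw, hcw_def⟩ : ∃ x_ : ℝ, x_ = (nw.re) := ⟨_, rfl⟩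
  have hnw : nw = (cw : ℂ) := by rw [hcw_def, hnw_def]; exact dot_self_real w
  have hcw : 0 ≤ cw := by
    rw [hcw_def, hnw_def, ← norm_ee_sq]; positivity
  have hvdc : v = μ • α + w := by rw [hw_def]; ring_nf
  have horthaw : star α ⬝ᵥ w = 0 := by
    rw [hw_def, dotProduct_sub, dotProduct_smul, hμ_def, smul_eq_mul, ← hna_def]
    field_simp
    ring
  have horthwa : star w ⬝ᵥ α = 0 := by
    have := star_dotProduct w α
    rw [this, horthaw, star_zero]
  have hμskew : star μ = -μ := by
    have h1 : star (star α ⬝ᵥ v) = star v ⬝ᵥ α := by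
      rw [star_dotProduct α v, star_star]
    have h2 : star v ⬝ᵥ α = -(star α ⬝ᵥ v) := by
      rw [hv_def, star_neg, neg_dotProduct, star_mulVec, hJ, ← dotProduct_mulVec,
        neg_mulVec, dotProduct_neg, neg_neg]
    have h3 : star na⁻¹ = na⁻¹ := by
      rw [star_inv₀, hna_def, star_dot_self]
    rw [hμ_def, star_mul', h3, h1, h2]  -- star (a*b) = star b * star a? use mul_comm
    ring
  -- matrices
  obtain ⟨ma, hma⟩ : ∃ x_ : Matrix (Fin n) (Fin n) ℂ, x_ = (vecMulVec α (star α)) := ⟨_, rfl⟩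
  obtain ⟨mb, hmb⟩ : ∃ x_ : Matrix (Fin n) (Fin n) ℂ, x_ = (vecMulVec w (star α)) := ⟨_, rfl⟩
  obtain ⟨mc, hmc⟩ : ∃ x_ : Matrix (Fin n) (Fin n) ℂ, x_ = (vecMulVec α (star w)) := ⟨_, rfl⟩
  obtain ⟨mq, hmq⟩ : ∃ x_ : Matrix (Fin n) (Fin n) ℂ, x_ = (vecMulVec w (star w)) := ⟨_, rfl⟩
  set DJ : Matrix (Fin n) (Fin n) ℂ :=
    (μ * na⁻¹) • ma + na⁻¹ • mb - na⁻¹ • mc - (μ * nw⁻¹) • mq with hDJ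
  have hstar_na_inv : star na⁻¹ = na⁻¹ := by rw [star_inv₀, hna_def, star_dot_self]
  have hstar_nw_inv : star nw⁻¹ = nw⁻¹ := by rw [star_inv₀, hnw_def, star_dot_self]
  have hskew : DJᴴ = -DJ := by
    rw [hDJ, conjTranspose_sub, conjTranspose_sub, conjTranspose_add,
      conjTranspose_smul, conjTranspose_smul, conjTranspose_smul, conjTranspose_smul,
      hma, hmb, hmc, hmq, outer_ct, outer_ct, outer_ct, outer_ct,
      show star (μ * na⁻¹) = -(μ * na⁻¹) by rw [star_mul', hstar_na_inv, hμskew]; ring,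
      show star (μ * nw⁻¹) = -(μ * nw⁻¹) by rw [star_mul', hstar_nw_inv, hμskew]; ring,
      hstar_na_inv]
    module
  refine ⟨DJ, hskew, ?_, ?_⟩
  · -- kernel
    rw [add_mulVec, hDJ]
    rw [sub_mulVec, sub_mulVec, add_mulVec, smul_mulVec, smul_mulVec,
      smul_mulVec, smul_mulVec, hma, hmb, hmc, hmq,
      outer_mulVec, outer_mulVec, outer_mulVec, outer_mulVec,
      ← hna_def, horthwa]
    have hJv : J.mulVec α = -v := by rw [hv_def, neg_neg]
    rw [hJv]
    have hcalc : (μ * na⁻¹) • na • α + na⁻¹ • na • w - na⁻¹ • (0 : ℂ) • α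
        - (μ * nw⁻¹) • (0 : ℂ) • w = v := by
      rw [hvdc]
      simp only [zero_smul, smul_zero, sub_zero, smul_smul]
      rw [show μ * na⁻¹ * na = μ by field_simp, show na⁻¹ * na = 1 by field_simp]
      module
    rw [hcalc, neg_add_cancel]
  · -- norm
    obtain ⟨κ, hκ⟩ : ∃ x_ : ℂ, x_ = (nw * na⁻¹ - μ ^ 2) := ⟨_, rfl⟩
    obtain ⟨Pr, hPr⟩ : ∃ x_ : Matrix (Fin n) (Fin n) ℂ, x_ = (na⁻¹ • ma + nw⁻¹ • mq) := ⟨_, rfl⟩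
    have houter : DJᴴ * DJ = κ • Pr := by
      rw [hskew, neg_mul]
      have hexp : DJ * DJ = -(κ • Pr) := by
        by_cases hw0 : w = 0
        · have hb0 : mb = 0 := by rw [hmb, hw0, vecMulVec_zero_left]
          have hc0 : mc = 0 := by rw [hmc, hw0]; simp [vecMulVec_zero_right]
          have hq0 : mq = 0 := by rw [hmq, hw0, vecMulVec_zero_left]
          have hnw0 : nw = 0 := by rw [hnw_def, hw0]; simp
          rw [hDJ, hb0, hc0, hq0, hPr, hq0, hκ, hnw0]
          simp only [smul_zero, add_zero, sub_zero, zero_mul, zero_sub]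
          rw [Matrix.smul_mul, Matrix.mul_smul, hma, outer_mul, ← hna_def]
          rw [smul_smul, smul_smul, smul_smul]
          match_scalars
          field_simp
        · have hnw0 : nw ≠ 0 := by
            rw [hnw_def]
            exact fun h => hw0 (dotProduct_star_self_eq_zero.mp h)
          rw [hDJ, hPr]
          simp only [Matrix.sub_mul, Matrix.mul_sub, Matrix.add_mul, Matrix.mul_add,
            Matrix.smul_mul, Matrix.mul_smul, hma, hmb, hmc, hmq, outer_mul,
            ← hna_def, ← hnw_def, horthaw, horthwa, zero_smul, smul_zero,
            smul_smul, sub_zero, zero_sub, add_zero, zero_add]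
          rw [hκ]
          match_scalars <;> field_simp <;> ring
      rw [hexp, neg_neg]
    have hPr_herm : Prᴴ = Pr := by
      rw [hPr, conjTranspose_add, conjTranspose_smul, conjTranspose_smul,
        hma, hmq, outer_ct, outer_ct, hstar_na_inv, hstar_nw_inv]
    have hPr_idem : Pr * Pr = Pr := by
      by_cases hw0 : w = 0
      · have hq0 : mq = 0 := by rw [hmq, hw0, vecMulVec_zero_left]
        rw [hPr, hq0]
        simp only [smul_zero, add_zero]
        rw [Matrix.smul_mul, Matrix.mul_smul, hma, outer_mul, ← hna_def, smul_smul,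
          smul_smul]
        match_scalars
        field_simp
      · have hnw0 : nw ≠ 0 := by
          rw [hnw_def]; exact fun h => hw0 (dotProduct_star_self_eq_zero.mp h)
        rw [hPr]
        simp only [Matrix.add_mul, Matrix.mul_add, Matrix.smul_mul, Matrix.mul_smul,
          hma, hmq, outer_mul, ← hna_def, ← hnw_def, horthaw, horthwa,
          zero_smul, smul_zero, smul_smul, add_zero, zero_add]
        match_scalars <;> field_simp
    have hPr_ne : Pr ≠ 0 := by
      intro h0
      have : Pr.mulVec α = α := by
        rw [hPr, add_mulVec, smul_mulVec, smul_mulVec, hma, hmq,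
          outer_mulVec, outer_mulVec, ← hna_def, horthwa]
        simp only [zero_smul, smul_zero, add_zero, smul_smul]
        rw [show na⁻¹ * na = 1 by field_simp, one_smul]
      rw [h0, zero_mulVec] at this
      exact hα this.symm
    have hPr_norm : specNorm Pr = 1 := by
      have h1 : specNorm Pr ^ 2 = specNorm Pr := by
        rw [← specNorm_conjTranspose_mul_self, hPr_herm, hPr_idem]
      have h2 : specNorm Pr ≠ 0 := fun h => hPr_ne (specNorm_eq_zero h)
      have := h1
      rw [pow_two] at this
      exact mul_left_cancel₀ h2 (by rw [this, mul_one])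
    obtain ⟨κr, hκr⟩ : ∃ x_ : ℝ, x_ = (cw * ca⁻¹ + ‖μ‖ ^ 2) := ⟨_, rfl⟩
    have hκ_eq : κ = (κr : ℂ) := by
      rw [hκ, hκr, hnw, hna]
      have : -μ ^ 2 = ((‖μ‖ ^ 2 : ℝ) : ℂ) := by
        have h1 : (starRingEnd ℂ) μ = -μ := hμskew
        have h2 := Complex.conj_mul' μ
        rw [h1] at h2
        push_cast
        linear_combination h2
      push_cast
      rw [sub_eq_add_neg, this]
      push_cast
      ring
    have hnorm_sq : specNorm DJ ^ 2 = κr := by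
      rw [← specNorm_conjTranspose_mul_self, houter, hκ_eq, specNorm_smul, hPr_norm,
        mul_one, Complex.norm_real, Real.norm_eq_abs, abs_of_nonneg (by rw [hκr]; exact add_nonneg (mul_nonneg hcw (inv_nonneg.mpr hca.le)) (sq_nonneg _))]
    rw [hnorm_sq]
    -- now show κr = num / ca
    have hnum : (star α ⬝ᵥ (Jᴴ * J).mulVec α).re = ‖μ‖ ^ 2 * ca + cw := by
      rw [dot_conj_mul]
      have hvv : star (J.mulVec α) ⬝ᵥ (J.mulVec α) = star v ⬝ᵥ v := by
        rw [hv_def, star_neg, neg_dotProduct, dotProduct_neg, neg_neg]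
      rw [hvv]
      have hvv2 : star v ⬝ᵥ v = ((‖μ‖ ^ 2 * ca + cw : ℝ) : ℂ) := by
        have h2 := Complex.conj_mul' μ
        rw [show (starRingEnd ℂ) μ = star μ from rfl, hμskew] at h2
        rw [hvdc]
        simp only [star_add, star_smul, add_dotProduct, dotProduct_add,
          smul_dotProduct, dotProduct_smul, smul_eq_mul, ← hna_def, ← hnw_def,
          horthaw, horthwa, mul_zero, zero_mul, add_zero, zero_add]
        rw [hna, hnw, hμskew]
        push_cast
        linear_combination (ca : ℂ) * h2
      rw [hvv2, Complex.ofReal_re]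
    rw [hnum, ← hna_def, ← hca_def, hκr]
    field_simp
    ring

lemma neg_mulVec_eq {S DS : Matrix (Fin n) (Fin n) ℂ} {x : Fin n → ℂ}
    (hker : (S + DS).mulVec x = 0) : (-DS).mulVec x = S.mulVec x := by
  rw [add_mulVec] at hker
  rw [neg_mulVec, neg_eq_iff_add_eq_zero, add_comm]
  exact hker

lemma lower_S {S DS : Matrix (Fin n) (Fin n) ℂ} (hS : S.PosSemidef)
    (hDS : (-DS).PosSemidef) {x : Fin n → ℂ} (hker : (S + DS).mulVec x = 0)
    (hx : S.mulVec x ≠ 0) :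
    (star x ⬝ᵥ (S * S).mulVec x).re / (star x ⬝ᵥ S.mulVec x).re ≤ specNorm DS := by
  have hmv : (-DS).mulVec x = S.mulVec x := neg_mulVec_eq hker
  have hnum : (star x ⬝ᵥ (S * S).mulVec x).re = ‖ee (S.mulVec x)‖ ^ 2 := by
    rw [show S * S = Sᴴ * S by rw [hS.isHermitian.eq], dot_conj_mul, ← norm_ee_sq]
  have h1 := psd_key hDS x
  rw [hmv] at h1
  rw [hnum, div_le_iff₀ (psd_quad_pos hS hx)]
  rw [specNorm_neg] at h1
  exact h1

lemma lower_J {J DJ : Matrix (Fin n) (Fin n) ℂ} {x : Fin n → ℂ}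
    (hker : (J + DJ).mulVec x = 0) (hx : x ≠ 0) :
    (star x ⬝ᵥ (Jᴴ * J).mulVec x).re / (star x ⬝ᵥ x).re ≤ specNorm DJ ^ 2 := by
  have hmv : (-DJ).mulVec x = J.mulVec x := neg_mulVec_eq hker
  have hnum : (star x ⬝ᵥ (Jᴴ * J).mulVec x).re = ‖ee (J.mulVec x)‖ ^ 2 := by
    rw [dot_conj_mul, ← norm_ee_sq]
  have h1 : ‖ee (J.mulVec x)‖ ≤ specNorm DJ * ‖ee x‖ := by
    rw [← hmv, ← specNorm_neg DJ]
    exact mulVec_norm_le _ _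
  have h2 : ‖ee (J.mulVec x)‖ ^ 2 ≤ specNorm DJ ^ 2 * ‖ee x‖ ^ 2 := by
    rw [← mul_pow]
    exact pow_le_pow_left₀ (norm_nonneg _) h1 2
  rw [hnum, div_le_iff₀ (dot_self_pos hx)]
  calc ‖ee (J.mulVec x)‖ ^ 2 ≤ specNorm DJ ^ 2 * ‖ee x‖ ^ 2 := h2
    _ = specNorm DJ ^ 2 * (star x ⬝ᵥ x).re := by rw [norm_ee_sq]

end DHAux

/-- For a regular DH pencil `sE + (J − R)`:
`δ₀ᵈ(J,R,E)² = min{ δ₀ᵈ(J,R)², δ₀ᵈ(J,E)²,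
  inf_{α ∈ ℳ₃} (αᴴJᴴJα)/(αᴴα) + ((αᴴR²α)/(αᴴRα))² + ((αᴴE²α)/(αᴴEα))² }`,
where `ℳ₃ = {α : Rα ≠ 0 ∧ Eα ≠ 0}`. -/
theorem DH_structured_distance_common_null
    {n : ℕ} (J R E : Matrix (Fin n) (Fin n) ℂ)
    (hJ : Jᴴ = -J) (hR : R.PosSemidef) (hE : E.PosSemidef)
    (hreg : ∃ l : ℂ, (l • E + (J - R)).det ≠ 0) :
    deltaJRE J R E ^ 2 =
      min (deltaJR J R E ^ 2) (min (deltaJE J R E ^ 2)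
        (sInf {r : ℝ≥0∞ | ∃ α : Fin n → ℂ,
          R.mulVec α ≠ 0 ∧ E.mulVec α ≠ 0 ∧
          r = ENNReal.ofReal
            ((star α ⬝ᵥ (Jᴴ * J).mulVec α).re / (star α ⬝ᵥ α).re +
             ((star α ⬝ᵥ (R * R).mulVec α).re / (star α ⬝ᵥ R.mulVec α).re) ^ 2 +
             ((star α ⬝ᵥ (E * E).mulVec α).re / (star α ⬝ᵥ E.mulVec α).re) ^ 2)})) := by
  classical
  have sq_ofReal : ∀ t : ℝ, 0 ≤ t →
      (ENNReal.ofReal (Real.sqrt t)) ^ 2 = ENNReal.ofReal t := fun t ht => by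
    rw [← ENNReal.ofReal_pow (Real.sqrt_nonneg t), Real.sq_sqrt ht]
  refine le_antisymm (le_min ?_ (le_min ?_ ?_)) ?_
  · -- deltaJRE^2 ≤ deltaJR^2
    refine pow_le_pow_left' ?_ 2
    refine sInf_le_sInf ?_
    rintro r ⟨DJ, DR, hDJ, hDR, hRDR, ⟨x, hx, hEx, hRx, hJx⟩, rfl⟩
    refine ⟨DJ, DR, 0, hDJ, hDR, by rw [neg_zero]; exact Matrix.PosSemidef.zero,
      hRDR, by rw [add_zero]; exact hE, ⟨x, hx, hJx, hRx, by rw [add_zero]; exact hEx⟩, ?_⟩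
    rw [DHAux.specNorm_zero]
    norm_num
  · -- deltaJRE^2 ≤ deltaJE^2
    refine pow_le_pow_left' ?_ 2
    refine sInf_le_sInf ?_
    rintro r ⟨DJ, DE, hDJ, hDE, hEDE, ⟨x, hx, hEx, hRx, hJx⟩, rfl⟩
    refine ⟨DJ, 0, DE, hDJ, by rw [neg_zero]; exact Matrix.PosSemidef.zero, hDE,
      by rw [add_zero]; exact hR, hEDE, ⟨x, hx, hJx, by rw [add_zero]; exact hRx, hEx⟩, ?_⟩
    rw [DHAux.specNorm_zero]
    norm_num
  · -- deltaJRE^2 ≤ sInf third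
    refine le_sInf ?_
    rintro r ⟨α, hRα, hEα, rfl⟩
    have hα : α ≠ 0 := fun h => hRα (by rw [h, mulVec_zero])
    obtain ⟨DJ, hDJskew, hDJker, hDJnorm⟩ := DHAux.exists_DJ J hJ α hα
    obtain ⟨DR, hDRneg, hDRpsd, hDRker, hDRnorm⟩ := DHAux.exists_DS hR α hRα
    obtain ⟨DE, hDEneg, hDEpsd, hDEker, hDEnorm⟩ := DHAux.exists_DS hE α hEα
    have h1 : deltaJRE J R E ≤ ENNReal.ofReal
        (Real.sqrt (specNorm DJ ^ 2 + specNorm DR ^ 2 + specNorm DE ^ 2)) :=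
      sInf_le ⟨DJ, DR, DE, hDJskew, hDRneg, hDEneg, hDRpsd, hDEpsd,
        ⟨α, hα, hDJker, hDRker, hDEker⟩, rfl⟩
    have hs0 : (0:ℝ) ≤ specNorm DJ ^ 2 + specNorm DR ^ 2 + specNorm DE ^ 2 := by positivity
    have hsq := pow_le_pow_left' h1 2
    rw [sq_ofReal _ hs0] at hsq
    rw [hDJnorm, hDRnorm, hDEnorm] at hsq
    exact hsq
  · -- min ≤ deltaJRE^2
    set M := min (deltaJR J R E ^ 2) (min (deltaJE J R E ^ 2)
        (sInf {r : ℝ≥0∞ | ∃ α : Fin n → ℂ,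
          R.mulVec α ≠ 0 ∧ E.mulVec α ≠ 0 ∧
          r = ENNReal.ofReal
            ((star α ⬝ᵥ (Jᴴ * J).mulVec α).re / (star α ⬝ᵥ α).re +
             ((star α ⬝ᵥ (R * R).mulVec α).re / (star α ⬝ᵥ R.mulVec α).re) ^ 2 +
             ((star α ⬝ᵥ (E * E).mulVec α).re / (star α ⬝ᵥ E.mulVec α).re) ^ 2)})) with hM
    have key : ∀ r ∈ {r : ℝ≥0∞ | ∃ DJ DR DE : Matrix (Fin n) (Fin n) ℂ,
        DJᴴ = -DJ ∧ (-DR).PosSemidef ∧ (-DE).PosSemidef ∧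
        (R + DR).PosSemidef ∧ (E + DE).PosSemidef ∧
        (∃ x : Fin n → ℂ, x ≠ 0 ∧ (J + DJ).mulVec x = 0 ∧
          (R + DR).mulVec x = 0 ∧ (E + DE).mulVec x = 0) ∧
        r = ENNReal.ofReal
          (Real.sqrt (specNorm DJ ^ 2 + specNorm DR ^ 2 + specNorm DE ^ 2))},
        M ≤ r ^ 2 := by
      rintro r ⟨DJ, DR, DE, hDJskew, hDRneg, hDEneg, hRDR, hEDE,
        ⟨x, hx0, hJx, hRx, hEx⟩, rfl⟩
      have hs0 : (0:ℝ) ≤ specNorm DJ ^ 2 + specNorm DR ^ 2 + specNorm DE ^ 2 := by positivity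
      rw [sq_ofReal _ hs0]
      by_cases hEx0 : E.mulVec x = 0
      · have h1 : deltaJR J R E ≤ ENNReal.ofReal
            (Real.sqrt (specNorm DJ ^ 2 + specNorm DR ^ 2)) :=
          sInf_le ⟨DJ, DR, hDJskew, hDRneg, hRDR, ⟨x, hx0, hEx0, hRx, hJx⟩, rfl⟩
        have h2 := pow_le_pow_left' h1 2
        rw [sq_ofReal _ (by positivity)] at h2
        refine le_trans (min_le_left _ _) (le_trans h2 (ENNReal.ofReal_le_ofReal ?_))
        nlinarith [sq_nonneg (specNorm DE)]
      by_cases hRx0 : R.mulVec x = 0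
      · have h1 : deltaJE J R E ≤ ENNReal.ofReal
            (Real.sqrt (specNorm DJ ^ 2 + specNorm DE ^ 2)) :=
          sInf_le ⟨DJ, DE, hDJskew, hDEneg, hEDE, ⟨x, hx0, hEx, hRx0, hJx⟩, rfl⟩
        have h2 := pow_le_pow_left' h1 2
        rw [sq_ofReal _ (by positivity)] at h2
        refine le_trans (min_le_right _ _) (le_trans (min_le_left _ _)
          (le_trans h2 (ENNReal.ofReal_le_ofReal ?_)))
        nlinarith [sq_nonneg (specNorm DR)]
      · have h1 : (sInf {r : ℝ≥0∞ | ∃ α : Fin n → ℂ,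
            R.mulVec α ≠ 0 ∧ E.mulVec α ≠ 0 ∧
            r = ENNReal.ofReal
              ((star α ⬝ᵥ (Jᴴ * J).mulVec α).re / (star α ⬝ᵥ α).re +
               ((star α ⬝ᵥ (R * R).mulVec α).re / (star α ⬝ᵥ R.mulVec α).re) ^ 2 +
               ((star α ⬝ᵥ (E * E).mulVec α).re / (star α ⬝ᵥ E.mulVec α).re) ^ 2)}) ≤
            ENNReal.ofReal
              ((star x ⬝ᵥ (Jᴴ * J).mulVec x).re / (star x ⬝ᵥ x).re +
               ((star x ⬝ᵥ (R * R).mulVec x).re / (star x ⬝ᵥ R.mulVec x).re) ^ 2 +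
               ((star x ⬝ᵥ (E * E).mulVec x).re / (star x ⬝ᵥ E.mulVec x).re) ^ 2) :=
          sInf_le ⟨x, hRx0, hEx0, rfl⟩
        have l1 := DHAux.lower_J hJx hx0
        have l2 := DHAux.lower_S hR hDRneg hRx hRx0
        have l3 := DHAux.lower_S hE hDEneg hEx hEx0
        have e2nn : 0 ≤ (star x ⬝ᵥ (R * R).mulVec x).re / (star x ⬝ᵥ R.mulVec x).re := by
          apply div_nonneg _ (DHAux.psd_quad_pos hR hRx0).le
          rw [show R * R = Rᴴ * R by rw [hR.isHermitian.eq], ← DHAux.norm_mulVec_sq]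
          positivity
        have e3nn : 0 ≤ (star x ⬝ᵥ (E * E).mulVec x).re / (star x ⬝ᵥ E.mulVec x).re := by
          apply div_nonneg _ (DHAux.psd_quad_pos hE hEx0).le
          rw [show E * E = Eᴴ * E by rw [hE.isHermitian.eq], ← DHAux.norm_mulVec_sq]
          positivity
        have l2' := pow_le_pow_left₀ e2nn l2 2
        have l3' := pow_le_pow_left₀ e3nn l3 2
        refine le_trans (min_le_right _ _) (le_trans (min_le_right _ _)
          (le_trans h1 (ENNReal.ofReal_le_ofReal ?_)))
        have : specNorm DR ^ 2 + specNorm DE ^ 2 ≥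
            ((star x ⬝ᵥ (R * R).mulVec x).re / (star x ⬝ᵥ R.mulVec x).re) ^ 2 +
            ((star x ⬝ᵥ (E * E).mulVec x).re / (star x ⬝ᵥ E.mulVec x).re) ^ 2 :=
          add_le_add l2' l3'
        linarith [l1]
    have h2 : M ^ ((1:ℝ)/2) ≤ deltaJRE J R E := by
      refine le_sInf fun r hr => ?_
      have h3 := key r hr
      calc M ^ ((1:ℝ)/2) ≤ (r ^ 2) ^ ((1:ℝ)/2) := ENNReal.rpow_le_rpow h3 (by norm_num)
        _ = r := by
            rw [← ENNReal.rpow_natCast r 2, ← ENNReal.rpow_mul]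
            norm_num
    calc M = (M ^ ((1:ℝ)/2)) ^ (2:ℕ) := by
          rw [← ENNReal.rpow_natCast _ 2, ← ENNReal.rpow_mul]
          norm_num
      _ ≤ deltaJRE J R E ^ 2 := pow_le_pow_left' h2 2
end

section
/- Let m, n ≥ 1 and let P(s) = Σ_{j=0}^{m} s^j A_j be a matrix polynomial with A₀, …, A_m ∈ ℂ^{n×n}. Then the unstructured distance to a common null space of P, namely the infimum of √(Σ_{j=0}^{m} ‖Δ_j‖²) over all tuples (Δ₀, …, Δ_m) ∈ (ℂ^{n×n})^{m+1} for which there exists a nonzero v ∈ ℂⁿ with (A_j − Δ_j)v = 0 for every j = 0, …, m, equals √(λ_min(Σ_{j=0}^{m} A_jᴴA_j)). -/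
open Matrix

section Aux

variable {k : Type*} [Fintype k] [DecidableEq k]

/-- Euclidean (ℓ²) norm of a vector. -/
noncomputable def eNorm (v : k → ℂ) : ℝ :=
  ‖((WithLp.equiv 2 (k → ℂ)).symm v : EuclideanSpace ℂ k)‖

lemma eNorm_nonneg (v : k → ℂ) : 0 ≤ eNorm v := norm_nonneg _

lemma eNorm_eq_zero {v : k → ℂ} : eNorm v = 0 ↔ v = 0 := by
  rw [eNorm, norm_eq_zero]
  constructor
  · intro h; exact congrArg (WithLp.equiv 2 (k → ℂ)) h
  · intro h; rw [h]; rfl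

lemma mulVec_eNorm_le (X : Matrix k k ℂ) (v : k → ℂ) :
    eNorm (X *ᵥ v) ≤ specNorm X * eNorm v := by
  rw [eNorm, eNorm, WithLp.equiv_symm_apply, ← Matrix.toEuclideanCLM_toLp]
  exact (Matrix.toEuclideanCLM (𝕜 := ℂ) X).le_opNorm _

lemma star_dotProduct_self (v : k → ℂ) :
    star v ⬝ᵥ v = ((eNorm v : ℝ) : ℂ) ^ 2 := by
  rw [dotProduct_comm, ← EuclideanSpace.inner_toLp_toLp (𝕜 := ℂ) v v, inner_self_eq_norm_sq_to_K]
  rfl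

lemma re_star_dotProduct_self (v : k → ℂ) :
    (star v ⬝ᵥ v).re = eNorm v ^ 2 := by
  rw [star_dotProduct_self, ← Complex.ofReal_pow, Complex.ofReal_re]

lemma re_quadform_conjTranspose_mul_self (X : Matrix k k ℂ) (v : k → ℂ) :
    (star v ⬝ᵥ ((Xᴴ * X) *ᵥ v)).re = eNorm (X *ᵥ v) ^ 2 := by
  rw [← Matrix.mulVec_mulVec, Matrix.dotProduct_mulVec, ← Matrix.star_mulVec,
    re_star_dotProduct_self]

lemma sum_mulVec {ι : Type*} (s : Finset ι) (M : ι → Matrix k k ℂ) (v : k → ℂ) :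
    (∑ j ∈ s, M j) *ᵥ v = ∑ j ∈ s, M j *ᵥ v := by
  funext i
  simp only [Matrix.mulVec, dotProduct, Matrix.sum_apply, Finset.sum_mul,
    Finset.sum_apply]
  exact Finset.sum_comm

lemma dotProduct_sum' {ι : Type*} (s : Finset ι) (u : k → ℂ) (y : ι → k → ℂ) :
    u ⬝ᵥ (∑ j ∈ s, y j) = ∑ j ∈ s, u ⬝ᵥ y j := by
  simp only [dotProduct, Finset.sum_apply, Finset.mul_sum]
  exact Finset.sum_comm

lemma vecMulVec_mulVec (w u x : k → ℂ) :
    Matrix.vecMulVec w u *ᵥ x = (u ⬝ᵥ x) • w := by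
  funext i
  simp only [Matrix.mulVec, dotProduct, Matrix.vecMulVec_apply, Pi.smul_apply,
    smul_eq_mul, Finset.sum_mul]
  exact Finset.sum_congr rfl fun j _ => by ring

/-- Rayleigh-type lower bound: `c ≤ λᵢ` for all `i` implies
`c * ‖v‖² ≤ re (vᴴ H v)`. -/
lemma rayleigh_lower {H : Matrix k k ℂ} (hH : H.IsHermitian) {c : ℝ}
    (hc : ∀ i, c ≤ hH.eigenvalues i) (v : k → ℂ) :
    c * (star v ⬝ᵥ v).re ≤ (star v ⬝ᵥ (H *ᵥ v)).re := by
  set U : Matrix k k ℂ := (hH.eigenvectorUnitary : Matrix k k ℂ) with hU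
  set w : k → ℂ := (star U) *ᵥ v with hw
  have hkey : ∀ x : k → ℂ, star v ⬝ᵥ (U *ᵥ x) = star w ⬝ᵥ x := by
    intro x
    rw [Matrix.dotProduct_mulVec, hw, Matrix.star_mulVec, Matrix.star_eq_conjTranspose,
      Matrix.conjTranspose_conjTranspose]
  have hU1 : U * star U = 1 := Unitary.coe_mul_star_self hH.eigenvectorUnitary
  have h2 : star v ⬝ᵥ v = star w ⬝ᵥ w := by
    rw [← hkey w, hw, Matrix.mulVec_mulVec, hU1, Matrix.one_mulVec]
  have h1 : star v ⬝ᵥ (H *ᵥ v)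
      = star w ⬝ᵥ ((Matrix.diagonal (Complex.ofReal ∘ hH.eigenvalues)) *ᵥ w) := by
    conv_lhs => rw [hH.spectral_theorem, Unitary.conjStarAlgAut_apply]
    rw [← Matrix.mulVec_mulVec, ← Matrix.mulVec_mulVec, hkey]
    rfl
  rw [h1, h2]
  have hterm : ∀ (r : ℝ) (z : ℂ), (star z * ((r : ℂ) * z)).re = r * Complex.normSq z := by
    intro r z
    rw [mul_left_comm, show star z * z = (starRingEnd ℂ) z * z from rfl, mul_comm ((starRingEnd ℂ) z) z,
      Complex.mul_conj, ← Complex.ofReal_mul, Complex.ofReal_re]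
  have hL : (star w ⬝ᵥ w).re = ∑ i, Complex.normSq (w i) := by
    rw [dotProduct, Complex.re_sum]
    refine Finset.sum_congr rfl fun i _ => ?_
    simpa using hterm 1 (w i)
  have hR : (star w ⬝ᵥ ((Matrix.diagonal (Complex.ofReal ∘ hH.eigenvalues)) *ᵥ w)).re
      = ∑ i, hH.eigenvalues i * Complex.normSq (w i) := by
    rw [dotProduct, Complex.re_sum]
    refine Finset.sum_congr rfl fun i _ => ?_
    rw [Matrix.mulVec_diagonal]
    exact hterm (hH.eigenvalues i) (w i)
  rw [hL, hR, Finset.mul_sum]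
  refine Finset.sum_le_sum fun i _ => ?_
  exact mul_le_mul_of_nonneg_right (hc i) (Complex.normSq_nonneg _)

/-- Spectral norm of the rank-one matrix `w vᴴ` for a unit vector `v`. -/
lemma specNorm_vecMulVec_star (w v : k → ℂ) (hv : eNorm v = 1) :
    specNorm (Matrix.vecMulVec w (star v)) = eNorm w := by
  set X := Matrix.vecMulVec w (star v) with hX
  have happ : ∀ x : EuclideanSpace ℂ k,
      Matrix.toEuclideanCLM (𝕜 := ℂ) X x
        = ((star v ⬝ᵥ (WithLp.equiv 2 (k → ℂ) x)) • ((WithLp.equiv 2 (k → ℂ)).symm w) :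
            EuclideanSpace ℂ k) := by
    intro x
    apply (WithLp.equiv 2 (k → ℂ)).injective
    rw [WithLp.equiv_apply, Matrix.ofLp_toEuclideanCLM, hX, _root_.vecMulVec_mulVec]
    simp
  apply le_antisymm
  · refine ContinuousLinearMap.opNorm_le_bound _ (eNorm_nonneg w) fun x => ?_
    rw [happ x, norm_smul]
    have hinner : star v ⬝ᵥ (WithLp.equiv 2 (k → ℂ) x)
        = (inner ℂ ((WithLp.equiv 2 (k → ℂ)).symm v : EuclideanSpace ℂ k) x : ℂ) := by
      rw [EuclideanSpace.inner_eq_star_dotProduct, dotProduct_comm]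
      rfl
    calc ‖star v ⬝ᵥ (WithLp.equiv 2 (k → ℂ) x)‖ * ‖(WithLp.equiv 2 (k → ℂ)).symm w‖
        ≤ (‖((WithLp.equiv 2 (k → ℂ)).symm v : EuclideanSpace ℂ k)‖ * ‖x‖) * eNorm w := by
          rw [hinner]
          exact mul_le_mul_of_nonneg_right (norm_inner_le_norm _ _) (eNorm_nonneg w)
      _ = eNorm w * ‖x‖ := by rw [show ‖((WithLp.equiv 2 (k → ℂ)).symm v :
            EuclideanSpace ℂ k)‖ = 1 from hv]; ring
  · have h1 : Matrix.toEuclideanCLM (𝕜 := ℂ) X ((WithLp.equiv 2 (k → ℂ)).symm v)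
        = ((WithLp.equiv 2 (k → ℂ)).symm w : EuclideanSpace ℂ k) := by
      rw [happ]
      have : star v ⬝ᵥ (WithLp.equiv 2 (k → ℂ)) ((WithLp.equiv 2 (k → ℂ)).symm v) = 1 := by
        rw [Equiv.apply_symm_apply, star_dotProduct_self, hv]
        norm_num
      rw [this, one_smul]
    calc eNorm w = ‖Matrix.toEuclideanCLM (𝕜 := ℂ) X ((WithLp.equiv 2 (k → ℂ)).symm v)‖ := by
          rw [h1]; rfl
      _ ≤ specNorm X * ‖((WithLp.equiv 2 (k → ℂ)).symm v : EuclideanSpace ℂ k)‖ :=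
          (Matrix.toEuclideanCLM (𝕜 := ℂ) X).le_opNorm _
      _ = specNorm X := by rw [show ‖((WithLp.equiv 2 (k → ℂ)).symm v :
            EuclideanSpace ℂ k)‖ = 1 from hv, mul_one]

end Aux

/-- Unstructured distance to a common null space of the coefficients of a matrix
polynomial `P(s) = Σ_{j=0}^m s^j A_j`:
`δ₀(P) = √(λ_min(Σ_j A_jᴴ A_j))`. -/
theorem unstructured_distance_common_null_polynomial
    {m n : ℕ} (hm : 1 ≤ m) (hn : 1 ≤ n)
    (A : Fin (m + 1) → Matrix (Fin n) (Fin n) ℂ) :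
    sInf {r : ℝ | ∃ (D : Fin (m + 1) → Matrix (Fin n) (Fin n) ℂ) (v : Fin n → ℂ),
        v ≠ 0 ∧ (∀ j, (A j - D j).mulVec v = 0) ∧
        r = Real.sqrt (∑ j, specNorm (D j) ^ 2)} =
      Real.sqrt (lamMin (∑ j, (A j)ᴴ * A j)) := by
  classical
  set H : Matrix (Fin n) (Fin n) ℂ := ∑ j, (A j)ᴴ * A j with hHdef
  have hH : H.IsHermitian := by
    rw [hHdef]
    unfold Matrix.IsHermitian
    rw [Matrix.conjTranspose_sum]
    refine Finset.sum_congr rfl fun j _ => ?_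
    rw [Matrix.conjTranspose_mul, Matrix.conjTranspose_conjTranspose]
  -- quadratic form identity
  have hquad : ∀ v : Fin n → ℂ,
      (star v ⬝ᵥ (H *ᵥ v)).re = ∑ j, eNorm (A j *ᵥ v) ^ 2 := by
    intro v
    rw [hHdef, _root_.sum_mulVec, dotProduct_sum', Complex.re_sum]
    exact Finset.sum_congr rfl fun j _ => re_quadform_conjTranspose_mul_self (A j) v
  have hlam : lamMin H = ⨅ i, hH.eigenvalues i := by rw [lamMin, dif_pos hH]
  haveI : Nonempty (Fin n) := Fin.pos_iff_nonempty.mp hn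
  obtain ⟨i0, hi0⟩ := Finite.exists_min hH.eigenvalues
  have hlam2 : lamMin H = hH.eigenvalues i0 :=
    hlam.trans (le_antisymm (ciInf_le (Finite.bddBelow_range _) i0) (le_ciInf hi0))
  -- the minimizing eigenvector
  set v0 : Fin n → ℂ := ⇑(hH.eigenvectorBasis i0) with hv0def
  have hv0norm : eNorm v0 = 1 := hH.eigenvectorBasis.orthonormal.1 i0
  have hv0ne : v0 ≠ 0 := by
    intro h
    rw [eNorm_eq_zero.mpr h] at hv0norm
    exact one_ne_zero hv0norm.symm
  have h11 : star v0 ⬝ᵥ v0 = 1 := by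
    rw [star_dotProduct_self, hv0norm]; norm_num
  have hq0 : (star v0 ⬝ᵥ (H *ᵥ v0)).re = hH.eigenvalues i0 := by
    have hHv0 : H *ᵥ v0 = hH.eigenvalues i0 • v0 := hH.mulVec_eigenvectorBasis i0
    rw [hHv0]
    have : star v0 ⬝ᵥ (hH.eigenvalues i0 • v0)
        = ((hH.eigenvalues i0 : ℂ)) * (star v0 ⬝ᵥ v0) := by
      rw [show (hH.eigenvalues i0 • v0) = ((hH.eigenvalues i0 : ℂ)) • v0 from
        funext fun i => by simp [Complex.real_smul], dotProduct_smul, smul_eq_mul]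
    rw [this, h11, mul_one, Complex.ofReal_re]
  -- the optimal perturbation
  set D0 : Fin (m + 1) → Matrix (Fin n) (Fin n) ℂ :=
    fun j => Matrix.vecMulVec (A j *ᵥ v0) (star v0) with hD0
  have hsum0 : ∑ j, specNorm (D0 j) ^ 2 = lamMin H := by
    rw [hlam2, ← hq0, hquad]
    exact Finset.sum_congr rfl fun j _ => by
      rw [hD0, specNorm_vecMulVec_star _ _ hv0norm]
  have hmem : Real.sqrt (lamMin H) ∈
      {r : ℝ | ∃ (D : Fin (m + 1) → Matrix (Fin n) (Fin n) ℂ) (v : Fin n → ℂ),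
        v ≠ 0 ∧ (∀ j, (A j - D j).mulVec v = 0) ∧
        r = Real.sqrt (∑ j, specNorm (D j) ^ 2)} := by
    refine ⟨D0, v0, hv0ne, fun j => ?_, by rw [hsum0]⟩
    rw [Matrix.sub_mulVec, hD0, _root_.vecMulVec_mulVec, h11, one_smul, sub_self]
  -- lower bound on every element of the set
  have hlb : ∀ r ∈ {r : ℝ | ∃ (D : Fin (m + 1) → Matrix (Fin n) (Fin n) ℂ) (v : Fin n → ℂ),
        v ≠ 0 ∧ (∀ j, (A j - D j).mulVec v = 0) ∧
        r = Real.sqrt (∑ j, specNorm (D j) ^ 2)}, Real.sqrt (lamMin H) ≤ r := by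
    rintro r ⟨D, v, hv, h0, rfl⟩
    apply Real.sqrt_le_sqrt
    have hAD : ∀ j, A j *ᵥ v = D j *ᵥ v := by
      intro j
      have := h0 j
      rw [Matrix.sub_mulVec, sub_eq_zero] at this
      exact this
    have hvpos : 0 < eNorm v ^ 2 := by
      have : eNorm v ≠ 0 := fun h => hv (eNorm_eq_zero.mp h)
      positivity
    have hray := rayleigh_lower hH hi0 v
    rw [hquad, re_star_dotProduct_self] at hray
    have hbound : ∑ j, eNorm (A j *ᵥ v) ^ 2 ≤ (∑ j, specNorm (D j) ^ 2) * eNorm v ^ 2 := by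
      rw [Finset.sum_mul]
      refine Finset.sum_le_sum fun j _ => ?_
      rw [hAD j, ← mul_pow]
      exact pow_le_pow_left₀ (eNorm_nonneg _) (mulVec_eNorm_le (D j) v) 2
    have : hH.eigenvalues i0 * eNorm v ^ 2 ≤ (∑ j, specNorm (D j) ^ 2) * eNorm v ^ 2 :=
      le_trans hray hbound
    rw [hlam2]
    exact le_of_mul_le_mul_right this hvpos
  exact le_antisymm (csInf_le ⟨Real.sqrt (lamMin H), hlb⟩ hmem) (le_csInf ⟨_, hmem⟩ hlb)
end
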